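/- arXiv:2212.09954 — 2 statements merged into one kernel-verified Lean document; each statement's English description precedes it below -/
import Mathlib

section
/- Let f : ℝ^d → ℝ ∪ {+∞} be a closed convex function with D := int(dom f) ≠ ∅, and let A be a closed set in ℝ^d such that f = f_A on cl D. Then ∂̄f(x) = ∂f(x) = conv(∂f(x) ∩ A) for every x ∈ D, and ∂̄f(x) ⊂ cl conv(∂f(x) ∩ A) for every x ∈ dom ∂̄f. -/
open Filter Topology Set Pointwise
open scoped RealInnerProductSpace

noncomputable section

abbrev Euc (d : ℕ) := EuclideanSpace ℝ (Fin d)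

/-- A proper lower-semicontinuous (closed) convex function with values in `ℝ ∪ {+∞}`. -/
def ClosedConvexFun {d : ℕ} (f : Euc d → EReal) : Prop :=
  LowerSemicontinuous f ∧ (∀ x, f x ≠ ⊥) ∧ (∃ x, f x ≠ ⊤) ∧
    ∀ x y : Euc d, ∀ a b : ℝ, 0 ≤ a → 0 ≤ b → a + b = 1 →
      f (a • x + b • y) ≤ (a : EReal) * f x + (b : EReal) * f y

/-- Subdifferential of an `EReal`-valued function. -/
def subdiff {d : ℕ} (f : Euc d → EReal) (x : Euc d) : Set (Euc d) :=
  {y | ∀ z : Euc d, ((⟪z, y⟫ : ℝ) : EReal) + f x ≤ f (x + z)}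

/-- Convex conjugate. -/
def fconj {d : ℕ} (f : Euc d → EReal) (y : Euc d) : EReal :=
  ⨆ x : Euc d, ((⟪x, y⟫ : ℝ) : EReal) - f x

/-- The function `f_A(x) = sup_{y ∈ A} (⟨x,y⟩ - f*(y))`. -/
def restrSup {d : ℕ} (f : Euc d → EReal) (A : Set (Euc d)) (x : Euc d) : EReal :=
  ⨆ y ∈ A, (((⟪x, y⟫ : ℝ) : EReal) - fconj f y)

/-- `Arg_A(x) = argmax_{y ∈ A} (⟨x,y⟩ - f*(y))`. -/
def argMaxOn {d : ℕ} (f : Euc d → EReal) (A : Set (Euc d)) (x : Euc d) : Set (Euc d) :=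
  {y ∈ A | ∀ z ∈ A, ((⟪x, z⟫ : ℝ) : EReal) - fconj f z ≤ ((⟪x, y⟫ : ℝ) : EReal) - fconj f y}

/-- Linear growth: `|g x| ≤ K (1 + |x|)`. -/
def LinGrowth {k : ℕ} (g : Euc k → ℝ) : Prop :=
  ∃ K > 0, ∀ x, |g x| ≤ K * (1 + ‖x‖)

/-- `x^{-j}`: delete the `j`-th coordinate. -/
def dropCoord {d : ℕ} (j : Fin (d + 1)) (x : Euc (d + 1)) : Euc d :=
  WithLp.toLp 2 (fun i => x (j.succAbove i))

/-- The class `H^j_C`. -/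
def MemH {d : ℕ} (j : Fin (d + 1)) (C : Set (Euc (d + 1))) (h : Euc (d + 1) → ℝ) : Prop :=
  ∃ g₁ g₂ : Euc d → ℝ, ConvexOn ℝ Set.univ g₁ ∧ ConvexOn ℝ Set.univ g₂ ∧
    LinGrowth g₁ ∧ LinGrowth g₂ ∧
    (∀ x : Euc (d + 1), h x = x j + g₁ (dropCoord j x) - g₂ (dropCoord j x)) ∧
    ∀ x : Euc (d + 1), DifferentiableAt ℝ g₁ (dropCoord j x) →
      DifferentiableAt ℝ g₂ (dropCoord j x) → gradient h x ∈ C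

/-- `θ^j(C) = {y / y^j : y ∈ C}`. -/
def theta {d : ℕ} (j : Fin d) (C : Set (Euc d)) : Set (Euc d) :=
  (fun y => (y j)⁻¹ • y) '' C

/-- `w` is a regular normal to `H` at `x`: `limsup_{H ∋ y → x} ⟨w, y-x⟩/|y-x| ≤ 0`. -/
def RegNormal {d : ℕ} (H : Set (Euc d)) (x w : Euc d) : Prop :=
  ∀ ε > 0, ∃ δ > 0, ∀ y ∈ H, y ≠ x → ‖y - x‖ < δ → ⟪w, y - x⟫ ≤ ε * ‖y - x‖

/-- `w` is a normal vector to `H` at `x`. -/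
def NormalVec {d : ℕ} (H : Set (Euc d)) (x w : Euc d) : Prop :=
  ∃ xs ws : ℕ → Euc d, (∀ n, xs n ∈ H ∧ RegNormal H (xs n) (ws n)) ∧
    Tendsto xs atTop (𝓝 x) ∧ Tendsto ws atTop (𝓝 w)

/-- Effective domain `{x | f x < ∞}`. -/
def effDom {d : ℕ} (f : Euc d → EReal) : Set (Euc d) := {x | f x ≠ ⊤}

/-- Real part of an `EReal`-valued function. -/
def toRealFun {d : ℕ} (f : Euc d → EReal) : Euc d → ℝ := fun x => (f x).toReal

/-- Points of `int (dom f)` where `f` is differentiable. -/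
def domGrad {d : ℕ} (f : Euc d → EReal) : Set (Euc d) :=
  {x | x ∈ interior (effDom f) ∧ DifferentiableAt ℝ (toRealFun f) x}

/-- `range ∇f`. -/
def gradRange {d : ℕ} (f : Euc d → EReal) : Set (Euc d) :=
  (fun x => gradient (toRealFun f) x) '' domGrad f

/-- Clarke-type subdifferential `∂̄f(x)`. -/
def clarke {d : ℕ} (f : Euc d → EReal) (x : Euc d) : Set (Euc d) :=
  closure (convexHull ℝ
    {v | ∃ xs : ℕ → Euc d, (∀ n, xs n ∈ domGrad f) ∧ Tendsto xs atTop (𝓝 x) ∧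
      Tendsto (fun n => gradient (toRealFun f) (xs n)) atTop (𝓝 v)})

/-- Singular set `Σ^j_A(Ψ)`. -/
def SigmaJ {d : ℕ} (Ψ : Euc d → Set (Euc d)) (j : Fin d) (A : Set (Euc d)) : Set (Euc d) :=
  {x | ∃ y₁ ∈ Ψ x ∩ A, ∃ y₂ ∈ Ψ x ∩ A, y₁ j ≠ y₂ j}

/-- The bilinear form `S(x,y) = ∑ x^i S^{ij} y^j`. -/
def Sbil {d : ℕ} (S : Matrix (Fin d) (Fin d) ℝ) (x y : Euc d) : ℝ :=
  ∑ i, ∑ k, x i * S i k * y k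

/-- Matrix acting on a vector. -/
def matVec {d : ℕ} (M : Matrix (Fin d) (Fin d) ℝ) (y : Euc d) : Euc d :=
  WithLp.toLp 2 (fun i => ∑ k, M i k * y k)

/-- Fitzpatrick function `ψ_G(x) = sup_{y ∈ G}(S(x,y) - S(y,y)/2)`. -/
def fitz {d : ℕ} (S : Matrix (Fin d) (Fin d) ℝ) (G : Set (Euc d)) (x : Euc d) : EReal :=
  ⨆ y ∈ G, ((Sbil S x y - Sbil S y y / 2 : ℝ) : EReal)

/-- `S`-monotone set. -/
def SMonotone {d : ℕ} (S : Matrix (Fin d) (Fin d) ℝ) (G : Set (Euc d)) : Prop :=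
  ∀ x ∈ G, ∀ y ∈ G, 0 ≤ Sbil S (x - y) (x - y)

/-- Projection `P_G(x) = argmin_{y ∈ G} S(x-y, x-y)`. -/
def proj {d : ℕ} (S : Matrix (Fin d) (Fin d) ℝ) (G : Set (Euc d)) (x : Euc d) : Set (Euc d) :=
  {y ∈ G | ∀ z ∈ G, Sbil S (x - y) (x - y) ≤ Sbil S (x - z) (x - z)}

/-- `S`-regular normal vector. -/
def SRegNormal {d : ℕ} (S : Matrix (Fin d) (Fin d) ℝ) (H : Set (Euc d)) (x w : Euc d) : Prop :=
  ∀ ε > 0, ∃ δ > 0, ∀ y ∈ H, y ≠ x → ‖y - x‖ < δ → Sbil S w (y - x) ≤ ε * ‖y - x‖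

/-- `S`-normal vector. -/
def SNormal {d : ℕ} (S : Matrix (Fin d) (Fin d) ℝ) (H : Set (Euc d)) (x w : Euc d) : Prop :=
  ∃ xs ws : ℕ → Euc d, (∀ n, xs n ∈ H ∧ SRegNormal S H (xs n) (ws n)) ∧
    Tendsto xs atTop (𝓝 x) ∧ Tendsto ws atTop (𝓝 w)

/-- First-order singular set `Σ₁^j(P_G)`. -/
def Sigma1J {d : ℕ} (S : Matrix (Fin d) (Fin d) ℝ) (G : Set (Euc d)) (j : Fin d) :
    Set (Euc d) :=
  {x | ∃ y₁ ∈ proj S G x, ∃ y₂ ∈ proj S G x,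
    0 < Sbil S (y₁ - y₂) (y₁ - y₂) ∧ y₁ j ≠ y₂ j}

/-- Zero-order singular set `Σ̄₀^j(P_G)`. -/
def Sigma0J {d : ℕ} (S : Matrix (Fin d) (Fin d) ℝ) (G : Set (Euc d)) (j : Fin d) :
    Set (Euc d) :=
  {x | ∃ y₁ ∈ proj S G x, ∃ y₂ ∈ proj S G x,
    Sbil S (y₁ - y₂) (y₁ - y₂) = 0 ∧ y₁ j ≠ y₂ j}

/-- The canonical bilinear form of index `m` on `ℝ^m × ℝ^k`. -/
def Lam {m k : ℕ} (p q : Euc m × Euc k) : ℝ := ⟪p.1, q.1⟫ - ⟪p.2, q.2⟫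

section Aux

open Metric MeasureTheory

variable {d : ℕ} {f : Euc d → EReal} {A : Set (Euc d)}

theorem isCompact_convexHull' {d : ℕ} {s : Set (Euc d)} (hs : IsCompact s) :
    IsCompact (convexHull ℝ s) := by
  classical
  rcases s.eq_empty_or_nonempty with rfl | ⟨p₀, hp₀⟩
  · simp
  set n := d + 1 with hn
  have key : convexHull ℝ s =
      (fun p : (Fin n → ℝ) × (Fin n → Euc d) => ∑ i, p.1 i • p.2 i) ''
        ((stdSimplex ℝ (Fin n)) ×ˢ (Set.univ.pi fun _ => s)) := by
    apply Subset.antisymm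
    · intro x hx
      obtain ⟨ι, hι, z, w, hzs, hai, hw0, hw1, hx⟩ :=
        eq_pos_convex_span_of_mem_convexHull hx
      have hne : Nonempty ι := by
        by_contra hne
        simp only [not_nonempty_iff] at hne
        rw [Finset.univ_eq_empty, Finset.sum_empty] at hw1
        norm_num at hw1
      have hcard : Fintype.card ι ≤ n := by
        have h1 := hai.finrank_vectorSpan_add_one
        have h2 : Module.finrank ℝ (vectorSpan ℝ (Set.range z)) ≤ d := by
          simpa using Submodule.finrank_le (vectorSpan ℝ (Set.range z))
        omega
      obtain ⟨e⟩ := Function.Embedding.nonempty_of_card_le (α := ι) (β := Fin n)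
        (by simpa using hcard)
      set w' : Fin n → ℝ := fun j => if h : ∃ i, e i = j then w h.choose else 0 with hw'
      set z' : Fin n → Euc d := fun j => if h : ∃ i, e i = j then z h.choose else p₀ with hz'
      have hwe : ∀ i, w' (e i) = w i := by
        intro i
        have h : ∃ i', e i' = e i := ⟨i, rfl⟩
        simp only [hw', dif_pos h]
        rw [e.injective h.choose_spec]
      have hze : ∀ i, z' (e i) = z i := by
        intro i
        have h : ∃ i', e i' = e i := ⟨i, rfl⟩
        simp only [hz', dif_pos h]
        rw [e.injective h.choose_spec]
      have transport : ∀ {M : Type} [AddCommMonoid M] (F : Fin n → M) (G : ι → M),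
          (∀ i, F (e i) = G i) → (∀ j, (¬ ∃ i, e i = j) → F j = 0) →
          ∑ j, F j = ∑ i, G i := by
        intro M _ F G hFe hF0
        rw [← Finset.sum_filter_add_sum_filter_not Finset.univ (fun j => ∃ i, e i = j)]
        have h2 : ∑ j ∈ Finset.univ.filter (fun j => ¬ ∃ i, e i = j), F j = 0 :=
          Finset.sum_eq_zero fun j hj => hF0 j (Finset.mem_filter.mp hj).2
        rw [h2, add_zero]
        have h3 : Finset.univ.filter (fun j => ∃ i, e i = j) = Finset.univ.map e := by
          ext j; simp [Finset.mem_map]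
        rw [h3, Finset.sum_map]
        exact Finset.sum_congr rfl fun i _ => hFe i
      refine ⟨(w', z'), ⟨⟨fun j => ?_, ?_⟩, ?_⟩, ?_⟩
      · simp only [hw']; split
        · exact (hw0 _).le
        · exact le_rfl
      · exact (transport w' w hwe (fun j hj => by simp [hw', dif_neg hj])).trans hw1
      · intro j _
        simp only [hz']; split
        · exact hzs ⟨_, rfl⟩
        · exact hp₀
      · exact (transport (fun j => w' j • z' j) (fun i => w i • z i)
          (fun i => by simp only [hwe, hze]) (fun j hj => by simp [hw', dif_neg hj])).trans hx
    · rintro x ⟨⟨w, z⟩, ⟨hw, hz⟩, rfl⟩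
      simp only [Set.mem_pi, mem_univ, forall_true_left] at hz
      have := Finset.centerMass_mem_convexHull (Finset.univ : Finset (Fin n))
        (fun i _ => hw.1 i) (by rw [hw.2]; norm_num) (fun i _ => hz i)
      rwa [Finset.centerMass, hw.2, inv_one, one_smul] at this
  rw [key]
  exact ((isCompact_stdSimplex _ _).prod (isCompact_univ_pi fun _ => hs)).image <| by fun_prop

lemma feq (hf : ClosedConvexFun f) {x : Euc d} (hx : x ∈ effDom f) :
    f x = ((toRealFun f x : ℝ) : EReal) := (EReal.coe_toReal hx (hf.2.1 x)).symm

lemma effDom_convex (hf : ClosedConvexFun f) : Convex ℝ (effDom f) := by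
  intro x hx y hy a b ha hb hab
  have h := hf.2.2.2 x y a b ha hb hab
  rw [feq hf hx, feq hf hy, ← EReal.coe_mul, ← EReal.coe_mul, ← EReal.coe_add] at h
  show f _ ≠ ⊤
  intro htop
  rw [htop] at h
  exact (EReal.coe_lt_top _).not_ge h

lemma toReal_convexOn (hf : ClosedConvexFun f) : ConvexOn ℝ (effDom f) (toRealFun f) := by
  refine ⟨effDom_convex hf, fun x hx y hy a b ha hb hab => ?_⟩
  have h := hf.2.2.2 x y a b ha hb hab
  have hm : a • x + b • y ∈ effDom f := effDom_convex hf hx hy ha hb hab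
  rw [feq hf hx, feq hf hy, feq hf hm, ← EReal.coe_mul, ← EReal.coe_mul, ← EReal.coe_add,
    EReal.coe_le_coe_iff] at h
  simpa [smul_eq_mul] using h

lemma interior_subset_effDom : interior (effDom f) ⊆ effDom f := interior_subset

lemma lipschitz_local (hf : ClosedConvexFun f) {x : Euc d} (hx : x ∈ interior (effDom f)) :
    ∃ δ > 0, ∃ K : NNReal, ball x δ ⊆ interior (effDom f) ∧
      LipschitzOnWith K (toRealFun f) (ball x δ) := by
  have hcvx : ConvexOn ℝ (interior (effDom f)) (toRealFun f) :=
    (toReal_convexOn hf).subset interior_subset (effDom_convex hf).interior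
  have hLL : LocallyLipschitzOn (interior (effDom f)) (toRealFun f) :=
    hcvx.locallyLipschitzOn isOpen_interior
  obtain ⟨K, t, ht, hK⟩ := hLL hx
  rw [isOpen_interior.nhdsWithin_eq hx] at ht
  obtain ⟨δ, hδ, hball⟩ := Metric.mem_nhds_iff.mp (Filter.inter_mem ht (isOpen_interior.mem_nhds hx))
  exact ⟨δ, hδ, K, fun z hz => (hball hz).2, hK.mono fun z hz => (hball hz).1⟩

lemma mem_subdiff_iff {x y : Euc d} :
    y ∈ subdiff f x ↔ ∀ x', ((⟪x' - x, y⟫ : ℝ) : EReal) + f x ≤ f x' := by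
  constructor
  · intro h x'
    have h2 := h (x' - x)
    have h3 : x + (x' - x) = x' := by abel
    rwa [h3] at h2
  · intro h z
    have h2 := h (x + z)
    have h3 : x + z - x = z := by abel
    rwa [h3] at h2

lemma subdiff_real (hf : ClosedConvexFun f) {x y : Euc d} (hx : x ∈ effDom f)
    (hy : y ∈ subdiff f x) {x' : Euc d} (hx' : x' ∈ effDom f) :
    ⟪x' - x, y⟫ + toRealFun f x ≤ toRealFun f x' := by
  have h := mem_subdiff_iff.mp hy x'
  rw [feq hf hx, feq hf hx', ← EReal.coe_add, EReal.coe_le_coe_iff] at h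
  exact h

lemma mem_subdiff_of_real (hf : ClosedConvexFun f) {x y : Euc d} (hx : x ∈ effDom f)
    (h : ∀ x' ∈ effDom f, ⟪x' - x, y⟫ + toRealFun f x ≤ toRealFun f x') :
    y ∈ subdiff f x := by
  rw [mem_subdiff_iff]
  intro x'
  by_cases hx' : x' ∈ effDom f
  · rw [feq hf hx, feq hf hx', ← EReal.coe_add, EReal.coe_le_coe_iff]
    exact h x' hx'
  · simp only [effDom, Set.mem_setOf_eq, not_not] at hx'
    rw [hx']
    exact le_top

lemma hasDerivAt_line {g : Euc d → ℝ} {G x : Euc d} (z : Euc d) (hg : HasGradientAt g G x) :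
    HasDerivAt (fun t : ℝ => g (x + t • z)) ⟪z, G⟫ 0 := by
  have h1 : HasDerivAt (fun t : ℝ => x + t • z) z 0 := by
    simpa using ((hasDerivAt_id (0:ℝ)).smul_const z).const_add x
  have hg' : HasFDerivAt g ((InnerProductSpace.toDual ℝ (Euc d)) G) (x + (0:ℝ) • z) := by
    simpa using hg.hasFDerivAt
  have h2 := hg'.comp_hasDerivAt 0 h1
  have h3 : ⟪z, G⟫ = ((InnerProductSpace.toDual ℝ (Euc d)) G) z := by
    simp [InnerProductSpace.toDual_apply_apply, real_inner_comm, mul_comm]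
  rw [h3]; exact h2

lemma slope_tendsto {g : Euc d → ℝ} {G x : Euc d} (z : Euc d) (hg : HasGradientAt g G x) :
    Filter.Tendsto (fun t => (g (x + t • z) - g x) / t) (𝓝[>] (0:ℝ)) (𝓝 ⟪z, G⟫) := by
  have h := hasDerivAt_iff_tendsto_slope.mp (hasDerivAt_line z hg)
  have h2 := h.mono_left (nhdsWithin_mono 0 (fun t ht => ne_of_gt ht : Set.Ioi (0:ℝ) ⊆ {0}ᶜ))
  refine h2.congr fun t => ?_
  simp [slope_def_field]

lemma slope_bound (hf : ClosedConvexFun f) {x x' G : Euc d} (hx : x ∈ interior (effDom f))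
    (hx' : x' ∈ effDom f) (hG : HasGradientAt (toRealFun f) G x) :
    ⟪x' - x, G⟫ ≤ toRealFun f x' - toRealFun f x := by
  set g := toRealFun f
  have hxe : x ∈ effDom f := interior_subset hx
  refine le_of_tendsto (slope_tendsto (x' - x) hG) ?_
  filter_upwards [Ioc_mem_nhdsGT_of_mem (Set.mem_Ico.mpr ⟨le_refl (0:ℝ), zero_lt_one⟩)]
    with t ht
  obtain ⟨ht0, ht1⟩ := ht
  have hcomb : x + t • (x' - x) = (1 - t) • x + t • x' := by
    rw [sub_smul, smul_sub, one_smul]; abel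
  have hmem : (1 - t) • x + t • x' ∈ effDom f :=
    effDom_convex hf hxe hx' (by linarith) ht0.le (by ring)
  have hcvx := (toReal_convexOn hf).2 hxe hx' (by linarith : (0:ℝ) ≤ 1 - t) ht0.le (by ring)
  rw [div_le_iff₀ ht0]
  have : g (x + t • (x' - x)) ≤ (1 - t) * g x + t * g x' := by
    rw [hcomb]; simpa [smul_eq_mul] using hcvx
  nlinarith [this]

lemma subdiff_grad_unique (hf : ClosedConvexFun f) {x y G : Euc d}
    (hx : x ∈ interior (effDom f)) (hG : HasGradientAt (toRealFun f) G x)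
    (hy : y ∈ subdiff f x) : y = G := by
  set g := toRealFun f
  have hxe : x ∈ effDom f := interior_subset hx
  have key : ∀ w : Euc d, ⟪w, y⟫ ≤ ⟪w, G⟫ := by
    intro w
    refine ge_of_tendsto (slope_tendsto w hG) ?_
    have hev : ∀ᶠ t in 𝓝[>] (0:ℝ), x + t • w ∈ interior (effDom f) := by
      have hcont : Filter.Tendsto (fun t : ℝ => x + t • w) (𝓝 0) (𝓝 x) := by
        have : Continuous (fun t : ℝ => x + t • w) := by continuity
        simpa using this.tendsto 0
      exact nhdsWithin_le_nhds (hcont.eventually (isOpen_interior.eventually_mem hx))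
    filter_upwards [hev, self_mem_nhdsWithin] with t htmem ht0
    have ht0 : (0:ℝ) < t := ht0
    have h := subdiff_real hf hxe hy (interior_subset htmem)
    have h2 : x + t • w - x = t • w := by abel
    rw [h2] at h
    rw [le_div_iff₀ ht0]
    have h3 : ⟪t • w, y⟫ = t * ⟪w, y⟫ := real_inner_smul_left w y t
    nlinarith [h]
  have h := key (y - G)
  rw [inner_sub_left, inner_sub_left] at h
  have h2 : ⟪y - G, y - G⟫ ≤ 0 := by rw [inner_sub_left, inner_sub_right, inner_sub_right]; nlinarith [real_inner_comm y G]
  have := real_inner_self_nonpos.mp h2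
  rwa [sub_eq_zero] at this

lemma grad_mem_subdiff (hf : ClosedConvexFun f) {x G : Euc d}
    (hx : x ∈ interior (effDom f)) (hG : HasGradientAt (toRealFun f) G x) :
    G ∈ subdiff f x := by
  refine mem_subdiff_of_real hf (interior_subset hx) fun x' hx' => ?_
  have := slope_bound hf hx hx' hG
  linarith

lemma subdiff_eq_singleton (hf : ClosedConvexFun f) {x : Euc d} (hx : x ∈ domGrad f) :
    subdiff f x = {gradient (toRealFun f) x} := by
  obtain ⟨hx1, hx2⟩ := hx
  have hG := hx2.hasGradientAt
  apply Set.Subset.antisymm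
  · intro y hy
    exact subdiff_grad_unique hf hx1 hG hy
  · intro y hy
    rw [Set.mem_singleton_iff] at hy
    rw [hy]
    exact grad_mem_subdiff hf hx1 hG

lemma norm_le_of_subdiff (hf : ClosedConvexFun f) {x y : Euc d} {δ : ℝ} {K : NNReal}
    (hδ : 0 < δ) (hball : ball x δ ⊆ interior (effDom f))
    (hK : LipschitzOnWith K (toRealFun f) (ball x δ)) (hy : y ∈ subdiff f x) : ‖y‖ ≤ K := by
  set g := toRealFun f
  have hxe : x ∈ effDom f := interior_subset (hball (mem_ball_self hδ))
  rcases eq_or_ne y 0 with rfl | hy0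
  · simpa using K.2
  have hny : 0 < ‖y‖ := norm_pos_iff.mpr hy0
  set w : Euc d := (δ/2) • ‖y‖⁻¹ • y with hw
  have hnw : ‖w‖ = δ/2 := by
    rw [hw, norm_smul, norm_smul, norm_inv, norm_norm, Real.norm_eq_abs,
      abs_of_nonneg (by linarith : (0:ℝ) ≤ δ/2), inv_mul_cancel₀ hny.ne']
    ring
  have hmem : x + w ∈ ball x δ := by
    rw [mem_ball_iff_norm]
    have : x + w - x = w := by abel
    rw [this, hnw]; linarith
  have h := subdiff_real hf hxe hy (interior_subset (hball hmem))
  have h2 : x + w - x = w := by abel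
  rw [h2] at h
  have h3 : ⟪w, y⟫ = (δ/2) * ‖y‖ := by
    rw [hw, real_inner_smul_left, real_inner_smul_left, real_inner_self_eq_norm_sq]
    field_simp
  have h4 : g (x + w) - g x ≤ K * (δ/2) := by
    have := hK.dist_le_mul (x := x + w) hmem (y := x) (mem_ball_self hδ)
    rw [Real.dist_eq, dist_eq_norm] at this
    have h5 : x + w - x = w := by abel
    rw [h5, hnw] at this
    calc g (x+w) - g x ≤ |g (x+w) - g x| := le_abs_self _
    _ ≤ K * (δ/2) := this
  have hKpos : (0:ℝ) ≤ K := K.2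
  nlinarith [h]

lemma subdiff_convex (hf : ClosedConvexFun f) (x : Euc d) : Convex ℝ (subdiff f x) := by
  rcases eq_or_ne (f x) ⊤ with htop | hne
  · have : subdiff f x = {y | ∀ z : Euc d, (⊤ : EReal) ≤ f (x + z)} := by
      ext y
      simp only [subdiff, Set.mem_setOf_eq, htop]
      constructor
      · intro h z; have := h z; rwa [EReal.add_top_of_ne_bot (EReal.coe_ne_bot _)] at this
      · intro h z; rw [EReal.add_top_of_ne_bot (EReal.coe_ne_bot _)]; exact h z
    rw [this]
    by_cases hP : ∀ z : Euc d, (⊤ : EReal) ≤ f (x + z)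
    · have : {y : Euc d | ∀ z : Euc d, (⊤ : EReal) ≤ f (x + z)} = Set.univ := by
        ext y; simpa using hP
      rw [this]; exact convex_univ
    · have : {y : Euc d | ∀ z : Euc d, (⊤ : EReal) ≤ f (x + z)} = ∅ := by
        ext y; simpa using hP
      rw [this]; exact convex_empty
  · set r := (f x).toReal with hr
    have hfx : f x = (r : EReal) := (EReal.coe_toReal hne (hf.2.1 x)).symm
    intro y₁ h₁ y₂ h₂ a b ha hb hab
    intro z
    have key : ⟪z, a • y₁ + b • y₂⟫ + r = a * (⟪z, y₁⟫ + r) + b * (⟪z, y₂⟫ + r) := by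
      rw [inner_add_right, real_inner_smul_right, real_inner_smul_right]
      linear_combination (-r) * hab
    have h₁' := h₁ z
    have h₂' := h₂ z
    rw [hfx, ← EReal.coe_add] at h₁' h₂' ⊢
    have hmax : ⟪z, a • y₁ + b • y₂⟫ + r ≤ max (⟪z, y₁⟫ + r) (⟪z, y₂⟫ + r) := by
      rw [key]
      rcases le_total (⟪z, y₁⟫ + r) (⟪z, y₂⟫ + r) with h | h
      · calc a * (⟪z, y₁⟫ + r) + b * (⟪z, y₂⟫ + r)
            ≤ a * (⟪z, y₂⟫ + r) + b * (⟪z, y₂⟫ + r) := by nlinarith [mul_nonneg ha (sub_nonneg.mpr h)]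
          _ = ⟪z, y₂⟫ + r := by linear_combination (⟪z, y₂⟫ + r) * hab
          _ ≤ _ := le_max_right _ _
      · calc a * (⟪z, y₁⟫ + r) + b * (⟪z, y₂⟫ + r)
            ≤ a * (⟪z, y₁⟫ + r) + b * (⟪z, y₁⟫ + r) := by nlinarith [mul_nonneg hb (sub_nonneg.mpr h)]
          _ = ⟪z, y₁⟫ + r := by linear_combination (⟪z, y₁⟫ + r) * hab
          _ ≤ _ := le_max_left _ _
    calc ((⟪z, a • y₁ + b • y₂⟫ + r : ℝ) : EReal)
        ≤ ((max (⟪z, y₁⟫ + r) (⟪z, y₂⟫ + r) : ℝ) : EReal) := EReal.coe_le_coe_iff.mpr hmax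
      _ ≤ f (x + z) := by
          rcases max_cases (⟪z, y₁⟫ + r) (⟪z, y₂⟫ + r) with ⟨heq, _⟩ | ⟨heq, _⟩ <;> rw [heq]
          · exact h₁'
          · exact h₂'

lemma subdiff_isClosed (hf : ClosedConvexFun f) (x : Euc d) : IsClosed (subdiff f x) := by
  rcases eq_or_ne (f x) ⊤ with htop | hne
  · have h1 : subdiff f x = {y | ∀ z : Euc d, (⊤ : EReal) ≤ f (x + z)} := by
      ext y
      simp only [subdiff, Set.mem_setOf_eq, htop]
      constructor
      · intro h z; have := h z; rwa [EReal.add_top_of_ne_bot (EReal.coe_ne_bot _)] at this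
      · intro h z; rw [EReal.add_top_of_ne_bot (EReal.coe_ne_bot _)]; exact h z
    rw [h1]
    by_cases hP : ∀ z : Euc d, (⊤ : EReal) ≤ f (x + z)
    · have : {y : Euc d | ∀ z : Euc d, (⊤ : EReal) ≤ f (x + z)} = Set.univ := by
        ext y; simpa using hP
      rw [this]; exact isClosed_univ
    · have : {y : Euc d | ∀ z : Euc d, (⊤ : EReal) ≤ f (x + z)} = ∅ := by
        ext y; simpa using hP
      rw [this]; exact isClosed_empty
  · set r := (f x).toReal with hr
    have hfx : f x = (r : EReal) := (EReal.coe_toReal hne (hf.2.1 x)).symm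
    have h1 : subdiff f x = ⋂ z : Euc d, {y | ((⟪z, y⟫ + r : ℝ) : EReal) ≤ f (x + z)} := by
      ext y
      simp only [subdiff, Set.mem_setOf_eq, Set.mem_iInter, hfx, EReal.coe_add]
    rw [h1]
    refine isClosed_iInter fun z => ?_
    rcases eq_or_ne (f (x + z)) ⊤ with htop2 | hne2
    · have : {y : Euc d | ((⟪z, y⟫ + r : ℝ) : EReal) ≤ f (x + z)} = Set.univ := by
        ext y; simp [htop2]
      rw [this]; exact isClosed_univ
    · set s := (f (x + z)).toReal with hs
      have hfz : f (x + z) = (s : EReal) := (EReal.coe_toReal hne2 (hf.2.1 _)).symm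
      have : {y : Euc d | ((⟪z, y⟫ + r : ℝ) : EReal) ≤ f (x + z)}
          = (fun y : Euc d => ⟪z, y⟫ + r) ⁻¹' (Set.Iic s) := by
        ext y
        simp only [Set.mem_setOf_eq, Set.mem_preimage, Set.mem_Iic, hfz, ← EReal.coe_add,
          EReal.coe_le_coe_iff]
      rw [this]
      have hc : Continuous (fun y : Euc d => ⟪z, y⟫ + r) := by
        have h : Continuous (fun y : Euc d => ⟪z, y⟫) := continuous_const.inner continuous_id
        exact h.add continuous_const
      exact IsClosed.preimage hc isClosed_Iic

lemma fconj_ge (x y : Euc d) : ((⟪x, y⟫ : ℝ) : EReal) - f x ≤ fconj f y :=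
  le_iSup (fun x' : Euc d => ((⟪x', y⟫ : ℝ) : EReal) - f x') x

lemma fconj_lsc (hf : ClosedConvexFun f) : LowerSemicontinuous (fconj f) := by
  apply lowerSemicontinuous_iSup
  intro x
  rcases eq_or_ne (f x) ⊤ with htop | hne
  · have : (fun y : Euc d => ((⟪x, y⟫ : ℝ) : EReal) - f x) = fun _ => (⊥ : EReal) := by
      funext y; rw [htop]; simp
    rw [this]
    exact lowerSemicontinuous_const
  · set r := (f x).toReal with hr
    have hfx : f x = (r : EReal) := (EReal.coe_toReal hne (hf.2.1 x)).symm
    have : (fun y : Euc d => ((⟪x, y⟫ : ℝ) : EReal) - f x)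
        = fun y : Euc d => ((⟪x, y⟫ - r : ℝ) : EReal) := by
      funext y; rw [hfx, EReal.coe_sub]
    rw [this]
    apply Continuous.lowerSemicontinuous
    refine continuous_coe_real_ereal.comp ?_
    have h : Continuous (fun y : Euc d => ⟪x, y⟫) := continuous_const.inner continuous_id
    exact h.sub continuous_const

lemma fconj_real_lb (hf : ClosedConvexFun f) {x : Euc d} (hx : x ∈ effDom f) (y : Euc d) :
    ((⟪x, y⟫ - toRealFun f x : ℝ) : EReal) ≤ fconj f y := by
  have := fconj_ge (f := f) x y
  rwa [feq hf hx, ← EReal.coe_sub] at this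

lemma mem_subdiff_of_fconj_le (hf : ClosedConvexFun f) {x y : Euc d} (hx : x ∈ effDom f)
    (h : fconj f y ≤ ((⟪x, y⟫ - toRealFun f x : ℝ) : EReal)) : y ∈ subdiff f x := by
  refine mem_subdiff_of_real hf hx fun x' hx' => ?_
  have h2 : ((⟪x', y⟫ - toRealFun f x' : ℝ) : EReal) ≤ ((⟪x, y⟫ - toRealFun f x : ℝ) : EReal) :=
    le_trans (fconj_real_lb hf hx' y) h
  rw [EReal.coe_le_coe_iff] at h2
  have : ⟪x' - x, y⟫ = ⟪x', y⟫ - ⟪x, y⟫ := by rw [inner_sub_left]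
  linarith

lemma fconj_le_of_mem_subdiff (hf : ClosedConvexFun f) {x y : Euc d} (hx : x ∈ effDom f)
    (hy : y ∈ subdiff f x) : fconj f y ≤ ((⟪x, y⟫ - toRealFun f x : ℝ) : EReal) := by
  refine iSup_le fun x' => ?_
  by_cases hx' : x' ∈ effDom f
  · rw [feq hf hx', ← EReal.coe_sub, EReal.coe_le_coe_iff]
    have := subdiff_real hf hx hy hx'
    have h2 : ⟪x' - x, y⟫ = ⟪x', y⟫ - ⟪x, y⟫ := by rw [inner_sub_left]
    linarith
  · simp only [effDom, Set.mem_setOf_eq, not_not] at hx'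
    rw [hx']
    simp

lemma domGrad_dense (hf : ClosedConvexFun f) {p : Euc d} (hp : p ∈ interior (effDom f))
    {r : ℝ} (hr : 0 < r) : ∃ z ∈ domGrad f, dist z p < r := by
  obtain ⟨δ, hδ, K, hball, hK⟩ := lipschitz_local hf hp
  set r' := min r δ with hr'
  have hr'0 : 0 < r' := lt_min hr hδ
  have hae : ∀ᵐ z ∂(volume : Measure (Euc d)), z ∈ ball p δ →
      DifferentiableWithinAt ℝ (toRealFun f) (ball p δ) z :=
    hK.ae_differentiableWithinAt_of_mem
  by_contra hcon
  push_neg at hcon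
  have hsub : ball p r' ⊆ {z | ¬(z ∈ ball p δ → DifferentiableWithinAt ℝ (toRealFun f)
      (ball p δ) z)} := by
    intro z hz
    have hzδ : z ∈ ball p δ := ball_subset_ball (min_le_right r δ) hz
    intro hgood
    have hdiff : DifferentiableAt ℝ (toRealFun f) z :=
      (hgood hzδ).differentiableAt (isOpen_ball.mem_nhds hzδ)
    have hzD : z ∈ domGrad f := ⟨hball hzδ, hdiff⟩
    have := hcon z hzD
    exact absurd (lt_of_lt_of_le (mem_ball.mp hz) (min_le_left r δ)) this.not_gt
  have h0 : (volume : Measure (Euc d)) {z | ¬(z ∈ ball p δ →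
      DifferentiableWithinAt ℝ (toRealFun f) (ball p δ) z)} = 0 := hae
  have := measure_mono_null hsub h0
  exact absurd this (measure_ball_pos _ _ hr'0).ne'

lemma exists_domGrad (hf : ClosedConvexFun f) (hD : (interior (effDom f)).Nonempty) :
    ∃ x₀, x₀ ∈ domGrad f := by
  obtain ⟨p, hp⟩ := hD
  obtain ⟨z, hz, _⟩ := domGrad_dense hf hp one_pos
  exact ⟨z, hz⟩

lemma exists_near_max (hf : ClosedConvexFun f)
    (hfA : ∀ x ∈ closure (interior (effDom f)), restrSup f A x = f x)
    {x : Euc d} (hx : x ∈ interior (effDom f)) {ε : ℝ} (hε : 0 < ε) :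
    ∃ y ∈ A, ((toRealFun f x - ε : ℝ) : EReal) < ((⟪x, y⟫ : ℝ) : EReal) - fconj f y := by
  have h1 : restrSup f A x = f x := hfA x (subset_closure hx)
  have hlt : ((toRealFun f x - ε : ℝ) : EReal) < restrSup f A x := by
    rw [h1, feq hf (interior_subset hx)]
    exact EReal.coe_lt_coe_iff.mpr (by linarith)
  rw [restrSup, lt_iSup_iff] at hlt
  obtain ⟨y, hy⟩ := hlt
  rw [lt_iSup_iff] at hy
  obtain ⟨hyA, hlt2⟩ := hy
  exact ⟨y, hyA, hlt2⟩

lemma coercive (hf : ClosedConvexFun f) {x : Euc d} {δ M : ℝ} (hδ : 0 < δ)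
    (hball : ball x δ ⊆ effDom f) (hM : ∀ u ∈ ball x δ, toRealFun f u ≤ M) (y : Euc d) :
    ((⟪x, y⟫ + (δ/2) * ‖y‖ - M : ℝ) : EReal) ≤ fconj f y := by
  rcases eq_or_ne y 0 with rfl | hy0
  · have h := fconj_real_lb hf (hball (mem_ball_self hδ)) 0
    refine le_trans ?_ h
    rw [EReal.coe_le_coe_iff]
    have := hM x (mem_ball_self hδ)
    simp only [norm_zero, mul_zero, add_zero]
    linarith
  · have hny : 0 < ‖y‖ := norm_pos_iff.mpr hy0
    set u : Euc d := x + (δ/2) • ‖y‖⁻¹ • y with hu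
    have hnu : ‖u - x‖ = δ/2 := by
      have : u - x = (δ/2) • ‖y‖⁻¹ • y := by rw [hu]; abel
      rw [this, norm_smul, norm_smul, norm_inv, norm_norm, Real.norm_eq_abs,
        abs_of_nonneg (by linarith : (0:ℝ) ≤ δ/2), inv_mul_cancel₀ hny.ne']
      ring
    have hmem : u ∈ ball x δ := by rw [mem_ball_iff_norm, hnu]; linarith
    have h := fconj_real_lb hf (hball hmem) y
    refine le_trans ?_ h
    rw [EReal.coe_le_coe_iff]
    have h2 : ⟪u, y⟫ = ⟪x, y⟫ + (δ/2) * ‖y‖ := by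
      rw [hu, inner_add_left, real_inner_smul_left, real_inner_smul_left,
        real_inner_self_eq_norm_sq]
      field_simp
    have := hM u hmem
    linarith

lemma tendsto_seq : Filter.Tendsto (fun n : ℕ => (1:ℝ) / (n+1)) Filter.atTop (𝓝 0) :=
  tendsto_one_div_add_atTop_nhds_zero_nat

lemma core (hf : ClosedConvexFun f) (hA : IsClosed A)
    (hfA : ∀ x ∈ closure (interior (effDom f)), restrSup f A x = f x)
    {x v : Euc d} (hx : x ∈ interior (effDom f)) (hv : v ∈ subdiff f x) (h : Euc d) :
    ∃ y₀ ∈ subdiff f x ∩ A, ⟪h, v⟫ ≤ ⟪h, y₀⟫ := by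
  classical
  set g := toRealFun f with hg
  have hxe : x ∈ effDom f := interior_subset hx
  obtain ⟨δ, hδ, K, hball, hK⟩ := lipschitz_local hf hx
  have hKpos : (0:ℝ) ≤ K := K.2
  set M : ℝ := g x + K * δ with hMdef
  have hM : ∀ u ∈ ball x δ, g u ≤ M := by
    intro u hu
    have := hK.dist_le_mul u hu x (mem_ball_self hδ)
    rw [Real.dist_eq] at this
    have h2 : |g u - g x| ≤ K * δ := le_trans this
      (by
        have := (mem_ball.mp hu).le
        nlinarith [dist_nonneg (x := u) (y := x)])
    have := abs_le.mp h2
    linarith [this.1, this.2]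
  have hcoer : ∀ y : Euc d, ((⟪x, y⟫ + (δ/2) * ‖y‖ - M : ℝ) : EReal) ≤ fconj f y :=
    coercive hf hδ (hball.trans interior_subset) hM
  -- the sequence of scales
  set c : ℝ := min 1 (δ / (4 * (‖h‖ + 1))) with hcdef
  have hc0 : 0 < c := lt_min one_pos (by positivity)
  set t : ℕ → ℝ := fun n => c / (n + 1) with htdef
  have ht0 : ∀ n, 0 < t n := fun n => by positivity
  have htc : ∀ n, t n ≤ c := fun n =>
    div_le_self hc0.le (by linarith [Nat.cast_nonneg (α := ℝ) n])
  have ht1 : ∀ n, t n ≤ 1 := fun n => le_trans (htc n) (min_le_left _ _)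
  have hth : ∀ n, t n * ‖h‖ < δ / 4 := by
    intro n
    have h1 : t n * ‖h‖ ≤ c * ‖h‖ :=
      mul_le_mul_of_nonneg_right (htc n) (norm_nonneg h)
    have h2 : c * ‖h‖ ≤ (δ / (4 * (‖h‖ + 1))) * ‖h‖ :=
      mul_le_mul_of_nonneg_right (min_le_right _ _) (norm_nonneg h)
    have h3 : (δ / (4 * (‖h‖ + 1))) * ‖h‖ < δ / 4 := by
      rw [div_mul_eq_mul_div, div_lt_div_iff₀ (by positivity) (by norm_num)]
      nlinarith [norm_nonneg h]
    linarith
  have httend : Filter.Tendsto t Filter.atTop (𝓝 0) := by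
    have := tendsto_seq.const_mul c
    simpa [htdef, mul_one_div, div_eq_mul_inv] using this
  set xs : ℕ → Euc d := fun n => x + t n • h with hxsdef
  have hxsball : ∀ n, xs n ∈ ball x δ := by
    intro n
    rw [mem_ball_iff_norm]
    have : x + t n • h - x = t n • h := by abel
    rw [this, norm_smul, Real.norm_eq_abs, abs_of_pos (ht0 n)]
    have := hth n
    linarith
  have hxsD : ∀ n, xs n ∈ interior (effDom f) := fun n => hball (hxsball n)
  have hxse : ∀ n, xs n ∈ effDom f := fun n => interior_subset (hxsD n)
  have hxstend : Filter.Tendsto xs Filter.atTop (𝓝 x) := by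
    have h1 : Filter.Tendsto (fun n => t n • h) Filter.atTop (𝓝 ((0:ℝ) • h)) :=
      httend.smul_const h
    rw [zero_smul] at h1
    have := h1.const_add x
    simpa using this
  -- near maximizers
  have hny : ∀ n : ℕ, ∃ y ∈ A,
      ((g (xs n) - (t n)^2 : ℝ) : EReal) < ((⟪xs n, y⟫ : ℝ) : EReal) - fconj f y := by
    intro n
    have := exists_near_max (A := A) hf hfA (hxsD n) (ε := (t n)^2) (by positivity)
    exact this
  choose y hyA hylt using hny
  -- fconj (y n) is real
  have hfcne_bot : ∀ n, fconj f (y n) ≠ ⊥ := by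
    intro n
    have := fconj_real_lb hf hxe (y n)
    exact fun hb => by rw [hb] at this; exact (EReal.bot_lt_coe _).not_ge (le_of_le_of_eq this rfl)
  have hfcne_top : ∀ n, fconj f (y n) ≠ ⊤ := by
    intro n
    intro htop
    have := hylt n
    rw [htop] at this
    simp at this
  set cn : ℕ → ℝ := fun n => (fconj f (y n)).toReal with hcn
  have hfc : ∀ n, fconj f (y n) = ((cn n : ℝ) : EReal) :=
    fun n => (EReal.coe_toReal (hfcne_top n) (hfcne_bot n)).symm
  -- real form of near-maximality
  have hreal : ∀ n, g (xs n) - (t n)^2 < ⟪xs n, y n⟫ - cn n := by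
    intro n
    have := hylt n
    rw [hfc n, ← EReal.coe_sub, EReal.coe_lt_coe_iff] at this
    exact this
  -- real form of lower bound at x
  have hlb : ∀ n, ⟪x, y n⟫ - g x ≤ cn n := by
    intro n
    have := fconj_real_lb hf hxe (y n)
    rw [hfc n, EReal.coe_le_coe_iff] at this
    exact this
  -- inner expansion
  have hinner : ∀ n, ⟪xs n, y n⟫ = ⟪x, y n⟫ + t n * ⟪h, y n⟫ := by
    intro n
    rw [hxsdef]
    simp only [inner_add_left, real_inner_smul_left]
  -- bound on g (xs n)
  have hgxs : ∀ n, g x - K * δ ≤ g (xs n) := by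
    intro n
    have := hK.dist_le_mul (xs n) (hxsball n) x (mem_ball_self hδ)
    rw [Real.dist_eq] at this
    have h2 : |g (xs n) - g x| ≤ K * δ := le_trans this
      (by
        have := (mem_ball.mp (hxsball n)).le
        nlinarith [dist_nonneg (x := xs n) (y := x)])
    have := (abs_le.mp h2).1
    linarith
  -- norm bound on y n
  set R : ℝ := (M - g x + K * δ + 1 + |M|) * 4 / δ + 1 with hRdef
  have hyR : ∀ n, y n ∈ Metric.closedBall (0 : Euc d) R := by
    intro n
    rw [Metric.mem_closedBall, dist_zero_right]
    have h1 : ⟪x, y n⟫ + (δ/2) * ‖y n‖ - M ≤ cn n := by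
      have := hcoer (y n)
      rw [hfc n, EReal.coe_le_coe_iff] at this
      exact this
    have h2 := hreal n
    rw [hinner n] at h2
    have h3 : t n * ⟪h, y n⟫ ≤ (δ/4) * ‖y n‖ := by
      have hcs : ⟪h, y n⟫ ≤ ‖h‖ * ‖y n‖ := real_inner_le_norm h (y n)
      have : t n * ⟪h, y n⟫ ≤ t n * (‖h‖ * ‖y n‖) := by
        apply mul_le_mul_of_nonneg_left hcs (ht0 n).le
      have h4 : t n * (‖h‖ * ‖y n‖) ≤ (δ/4) * ‖y n‖ := by
        rw [← mul_assoc]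
        apply mul_le_mul_of_nonneg_right (hth n).le (norm_nonneg _)
      linarith
    have h5 : (t n)^2 ≤ 1 := by nlinarith [ht0 n, ht1 n]
    have h6 := hgxs n
    -- (δ/2)‖y n‖ ≤ M + cn n - ⟪x,y n⟫ and cn n < ⟪x,y n⟫ + t⟪h,y⟫ - g xs + t²
    have h7 : (δ/2) * ‖y n‖ < M + (δ/4) * ‖y n‖ - (g x - K * δ) + 1 := by nlinarith
    have h8 : (δ/4) * ‖y n‖ < M - g x + K * δ + 1 + |M| := by
      have : (0:ℝ) ≤ |M| := abs_nonneg M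
      nlinarith
    have h9 : ‖y n‖ < (M - g x + K * δ + 1 + |M|) * 4 / δ := by
      rw [lt_div_iff₀ hδ]
      nlinarith
    rw [hRdef]
    linarith
  -- subsequence
  obtain ⟨y₀, hy₀ball, φ, hφ, hyconv⟩ := (isCompact_closedBall (0 : Euc d) R).tendsto_subseq hyR
  have hy₀A : y₀ ∈ A := hA.mem_of_tendsto hyconv (Filter.Eventually.of_forall fun n => hyA (φ n))
  -- continuity facts
  have hφtend : Filter.Tendsto (fun n => t (φ n)) Filter.atTop (𝓝 0) :=
    httend.comp hφ.tendsto_atTop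
  have hinnertend : Filter.Tendsto (fun n => ⟪x, y (φ n)⟫) Filter.atTop (𝓝 ⟪x, y₀⟫) :=
    (Continuous.inner continuous_const continuous_id).continuousAt.tendsto.comp hyconv
  have hinnerh : Filter.Tendsto (fun n => ⟪h, y (φ n)⟫) Filter.atTop (𝓝 ⟪h, y₀⟫) :=
    (Continuous.inner continuous_const continuous_id).continuousAt.tendsto.comp hyconv
  have hgcont : ContinuousAt g x :=
    hK.continuousOn.continuousAt (isOpen_ball.mem_nhds (mem_ball_self hδ))
  have hgxtend : Filter.Tendsto (fun n => g (xs (φ n))) Filter.atTop (𝓝 (g x)) :=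
    hgcont.tendsto.comp (hxstend.comp hφ.tendsto_atTop)
  -- the sequence r n := ⟪xs n, y n⟫ - g (xs n) + t n ^ 2 along φ tends to ⟪x,y₀⟫ - g x
  have hrtend : Filter.Tendsto
      (fun n => ⟪x, y (φ n)⟫ + t (φ n) * ⟪h, y (φ n)⟫ - g (xs (φ n)) + (t (φ n))^2)
      Filter.atTop (𝓝 (⟪x, y₀⟫ + 0 * ⟪h, y₀⟫ - g x + 0^2)) := by
    apply Filter.Tendsto.add
    · exact (hinnertend.add (hφtend.mul hinnerh)).sub hgxtend
    · exact (hφtend.pow 2)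
  have hrlim : (⟪x, y₀⟫ + 0 * ⟪h, y₀⟫ - g x + (0:ℝ)^2) = ⟪x, y₀⟫ - g x := by ring
  rw [hrlim] at hrtend
  -- y₀ ∈ subdiff f x
  have hy₀sub : y₀ ∈ subdiff f x := by
    apply mem_subdiff_of_fconj_le hf hxe
    by_contra hgt
    push_neg at hgt
    obtain ⟨q, hq1, hq2⟩ := EReal.exists_between_coe_real hgt
    have hev1 : ∀ᶠ n in Filter.atTop, ((q:ℝ) : EReal) < fconj f (y (φ n)) := by
      have hlsc := fconj_lsc hf y₀ ((q:ℝ):EReal) hq2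
      exact hyconv.eventually hlsc
    have hev2 : ∀ᶠ n in Filter.atTop,
        ⟪x, y (φ n)⟫ + t (φ n) * ⟪h, y (φ n)⟫ - g (xs (φ n)) + (t (φ n))^2 < q := by
      apply hrtend.eventually_lt_const
      rwa [EReal.coe_lt_coe_iff] at hq1
    obtain ⟨n, h1, h2⟩ := (hev1.and hev2).exists
    rw [hfc (φ n), EReal.coe_lt_coe_iff] at h1
    have h3 := hreal (φ n)
    rw [hinner (φ n)] at h3
    linarith
  -- the inequality
  have hineqn : ∀ n, ⟪h, v⟫ ≤ ⟪h, y (φ n)⟫ + t (φ n) := by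
    intro n
    have hsub := subdiff_real hf hxe hv (hxse (φ n))
    have hxsx : xs (φ n) - x = t (φ n) • h := by
      show x + t (φ n) • h - x = t (φ n) • h
      rw [add_sub_cancel_left]
    rw [hxsx, real_inner_smul_left] at hsub
    have h2 := hreal (φ n)
    rw [hinner (φ n)] at h2
    have h3 := hlb (φ n)
    have ht := ht0 (φ n)
    have hts := ht1 (φ n)
    -- t⟪h,v⟫ ≤ g xs - g x < t⟪h,y⟫ + t²
    have ht2 : t (φ n) * t (φ n) = (t (φ n))^2 := (sq (t (φ n))).symm
    have h5 : t (φ n) * ⟪h, v⟫ ≤ t (φ n) * (⟪h, y (φ n)⟫ + t (φ n)) := by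
      rw [mul_add]
      linarith
    exact le_of_mul_le_mul_left h5 ht
  have hlimineq : Filter.Tendsto (fun n => ⟪h, y (φ n)⟫ + t (φ n)) Filter.atTop
      (𝓝 (⟪h, y₀⟫ + 0)) := hinnerh.add hφtend
  rw [add_zero] at hlimineq
  exact ⟨y₀, ⟨hy₀sub, hy₀A⟩, ge_of_tendsto hlimineq (Filter.Eventually.of_forall hineqn)⟩

/-- The set of limits of gradients along sequences of differentiability points tending to `x`. -/
def gradLim (f : Euc d → EReal) (x : Euc d) : Set (Euc d) :=
  {v | ∃ xs : ℕ → Euc d, (∀ n, xs n ∈ domGrad f) ∧ Filter.Tendsto xs Filter.atTop (𝓝 x) ∧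
    Filter.Tendsto (fun n => gradient (toRealFun f) (xs n)) Filter.atTop (𝓝 v)}

lemma clarke_eq (x : Euc d) : clarke f x = closure (convexHull ℝ (gradLim f x)) := rfl

lemma subdiff_compact (hf : ClosedConvexFun f) {x : Euc d} (hx : x ∈ interior (effDom f)) :
    IsCompact (subdiff f x) := by
  obtain ⟨δ, hδ, K, hball, hK⟩ := lipschitz_local hf hx
  apply Metric.isCompact_of_isClosed_isBounded (subdiff_isClosed hf x)
  apply (Metric.isBounded_closedBall (x := (0 : Euc d)) (r := K)).subset
  intro y hy
  rw [Metric.mem_closedBall, dist_zero_right]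
  exact norm_le_of_subdiff hf hδ hball hK hy

lemma subdiff_eq_convexHull (hf : ClosedConvexFun f) (hA : IsClosed A)
    (hfA : ∀ x ∈ closure (interior (effDom f)), restrSup f A x = f x)
    {x : Euc d} (hx : x ∈ interior (effDom f)) :
    subdiff f x = convexHull ℝ (subdiff f x ∩ A) := by
  apply Set.Subset.antisymm
  · intro v hv
    by_contra hvK
    have hcpt : IsCompact (convexHull ℝ (subdiff f x ∩ A)) :=
      isCompact_convexHull' ((subdiff_compact hf hx).inter_right hA)
    obtain ⟨l, u, hl, hu⟩ := geometric_hahn_banach_closed_point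
      (convex_convexHull ℝ _) hcpt.isClosed hvK
    obtain ⟨h, hh⟩ : ∃ h : Euc d, ∀ y, l y = ⟪h, y⟫ := by
      obtain ⟨h, hh⟩ := (InnerProductSpace.toDual ℝ (Euc d)).surjective l
      exact ⟨h, fun y => by rw [← hh]; simp [InnerProductSpace.toDual_apply_apply]⟩
    obtain ⟨y₀, hy₀, hineq⟩ := core hf hA hfA hx hv h
    have h1 : l y₀ < u := hl y₀ (subset_convexHull ℝ _ hy₀)
    rw [hh] at h1 hu
    linarith
  · exact convexHull_min Set.inter_subset_left (subdiff_convex hf x)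

lemma gradLim_subset_subdiff (hf : ClosedConvexFun f) (hD : (interior (effDom f)).Nonempty)
    (x : Euc d) : gradLim f x ⊆ subdiff f x := by
  rintro v ⟨xs, hdom, hxs, hgrad⟩
  set g := toRealFun f
  set vs : ℕ → Euc d := fun n => gradient g (xs n) with hvs
  have hvsub : ∀ n, vs n ∈ subdiff f (xs n) := fun n =>
    grad_mem_subdiff hf (hdom n).1 (hdom n).2.hasGradientAt
  obtain ⟨x₀, hx₀⟩ := exists_domGrad hf hD
  have hx₀e : x₀ ∈ effDom f := interior_subset hx₀.1
  set w₀ : Euc d := gradient g x₀ with hw₀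
  have hw₀sub : w₀ ∈ subdiff f x₀ := grad_mem_subdiff hf hx₀.1 hx₀.2.hasGradientAt
  set c₀ : ℝ := ⟪x₀, w₀⟫ - g x₀ with hc₀
  have hfc₀ : fconj f w₀ ≤ ((c₀ : ℝ) : EReal) := fconj_le_of_mem_subdiff hf hx₀e hw₀sub
  -- bounds on a n := g (xs n)
  set a : ℕ → ℝ := fun n => g (xs n) with ha
  have hlbn : ∀ n, ⟪xs n, w₀⟫ - c₀ ≤ a n := by
    intro n
    have h1 := fconj_real_lb hf (interior_subset (hdom n).1) w₀
    have h2 := le_trans h1 hfc₀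
    rw [EReal.coe_le_coe_iff] at h2
    linarith
  have hubn : ∀ n, a n ≤ g x₀ + ‖xs n - x₀‖ * ‖vs n‖ := by
    intro n
    have h1 := subdiff_real hf (interior_subset (hdom n).1) (hvsub n) hx₀e
    have h2 : ⟪x₀ - xs n, vs n⟫ ≥ -(‖xs n - x₀‖ * ‖vs n‖) := by
      have := real_inner_le_norm (xs n - x₀) (vs n)
      have h3 : ⟪x₀ - xs n, vs n⟫ = -⟪xs n - x₀, vs n⟫ := by
        rw [← inner_neg_left]; congr 1; abel
      linarith
    linarith
  -- the lower/upper bounds converge, so (a n) is eventually bounded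
  have hlb_t : Filter.Tendsto (fun n => ⟪xs n, w₀⟫ - c₀) Filter.atTop (𝓝 (⟪x, w₀⟫ - c₀)) :=
    (hxs.inner tendsto_const_nhds).sub tendsto_const_nhds
  have hub_t : Filter.Tendsto (fun n => g x₀ + ‖xs n - x₀‖ * ‖vs n‖) Filter.atTop
      (𝓝 (g x₀ + ‖x - x₀‖ * ‖v‖)) :=
    tendsto_const_nhds.add (((hxs.sub tendsto_const_nhds).norm).mul hgrad.norm)
  set L : ℝ := ⟪x, w₀⟫ - c₀ - 1 with hL
  set U : ℝ := g x₀ + ‖x - x₀‖ * ‖v‖ + 1 with hU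
  have hev : ∀ᶠ n in Filter.atTop, a n ∈ Set.Icc L U := by
    have h1 : ∀ᶠ n in Filter.atTop, ⟪x, w₀⟫ - c₀ - 1 < ⟪xs n, w₀⟫ - c₀ :=
      hlb_t.eventually_const_lt (by linarith)
    have h2 : ∀ᶠ n in Filter.atTop, g x₀ + ‖xs n - x₀‖ * ‖vs n‖ < U :=
      hub_t.eventually_lt_const (by rw [hU]; linarith)
    filter_upwards [h1, h2] with n h1 h2
    exact ⟨by have := hlbn n; rw [hL]; linarith, by have := hubn n; linarith⟩
  obtain ⟨N, hN⟩ := Filter.eventually_atTop.mp hev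
  -- extract a convergent subsequence of (a (N + k))
  have hIcc : ∀ k : ℕ, a (N + k) ∈ Set.Icc L U := fun k => hN (N + k) (by omega)
  obtain ⟨cl, hclIcc, ψ, hψ, hconv⟩ := (isCompact_Icc (a := L) (b := U)).tendsto_subseq hIcc
  set m : ℕ → ℕ := fun k => N + ψ k with hm
  have hmmono : StrictMono m := fun i j hij => by
    simp only [hm]
    exact Nat.add_lt_add_left (hψ hij) N
  have hxm : Filter.Tendsto (fun k => xs (m k)) Filter.atTop (𝓝 x) := by
    apply hxs.comp hmmono.tendsto_atTop
  have hvm : Filter.Tendsto (fun k => vs (m k)) Filter.atTop (𝓝 v) := by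
    apply hgrad.comp hmmono.tendsto_atTop
  have ham : Filter.Tendsto (fun k => a (m k)) Filter.atTop (𝓝 cl) := hconv
  -- f x ≤ cl
  have hfxle : f x ≤ ((cl : ℝ) : EReal) := by
    by_contra hcon
    push_neg at hcon
    obtain ⟨q, hq1, hq2⟩ := EReal.exists_between_coe_real hcon
    have hev1 : ∀ᶠ z in 𝓝 x, ((q:ℝ):EReal) < f z := hf.1 x ((q:ℝ):EReal) hq2
    have hev2 : ∀ᶠ k in Filter.atTop, ((q:ℝ):EReal) < f (xs (m k)) := hxm.eventually hev1
    have hev3 : ∀ᶠ k in Filter.atTop, a (m k) < q := by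
      apply ham.eventually_lt_const
      rwa [EReal.coe_lt_coe_iff] at hq1
    obtain ⟨k, h1, h2⟩ := (hev2.and hev3).exists
    rw [feq hf (interior_subset (hdom (m k)).1), EReal.coe_lt_coe_iff] at h1
    have h2' : toRealFun f (xs (m k)) < q := h2
    linarith
  -- conclude membership
  rw [mem_subdiff_iff]
  intro x'
  have hterm : ∀ k, ((⟪x' - xs (m k), vs (m k)⟫ + a (m k) : ℝ) : EReal) ≤ f x' := by
    intro k
    have h1 := mem_subdiff_iff.mp (hvsub (m k)) x'
    rwa [feq hf (interior_subset (hdom (m k)).1), ← EReal.coe_add] at h1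
  have hlim : Filter.Tendsto (fun k => ⟪x' - xs (m k), vs (m k)⟫ + a (m k)) Filter.atTop
      (𝓝 (⟪x' - x, v⟫ + cl)) :=
    ((tendsto_const_nhds.sub hxm).inner hvm).add ham
  have hlim2 : Filter.Tendsto (fun k => ((⟪x' - xs (m k), vs (m k)⟫ + a (m k) : ℝ) : EReal))
      Filter.atTop (𝓝 ((⟪x' - x, v⟫ + cl : ℝ) : EReal)) :=
    (continuous_coe_real_ereal.tendsto _).comp hlim
  have hfinal : ((⟪x' - x, v⟫ + cl : ℝ) : EReal) ≤ f x' :=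
    le_of_tendsto hlim2 (Filter.Eventually.of_forall hterm)
  calc ((⟪x' - x, v⟫ : ℝ) : EReal) + f x ≤ ((⟪x' - x, v⟫ : ℝ) : EReal) + ((cl : ℝ) : EReal) :=
        add_le_add_right hfxle _
    _ = ((⟪x' - x, v⟫ + cl : ℝ) : EReal) := by rw [EReal.coe_add]
    _ ≤ f x' := hfinal

lemma gradLim_subset_A (hf : ClosedConvexFun f) (hA : IsClosed A)
    (hfA : ∀ x ∈ closure (interior (effDom f)), restrSup f A x = f x)
    (x : Euc d) : gradLim f x ⊆ A := by
  rintro v ⟨xs, hdom, hxs, hgrad⟩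
  have hmem : ∀ n, gradient (toRealFun f) (xs n) ∈ A := by
    intro n
    by_contra hnA
    have h1 := subdiff_eq_singleton hf (hdom n)
    have h2 := subdiff_eq_convexHull hf hA hfA (hdom n).1
    rw [h1] at h2
    have h3 : ({gradient (toRealFun f) (xs n)} : Set (Euc d)) ∩ A = ∅ := by
      ext z; simp only [Set.mem_inter_iff, Set.mem_singleton_iff, Set.mem_empty_iff_false,
        iff_false, not_and]
      rintro rfl; exact hnA
    rw [h3, convexHull_empty] at h2
    exact absurd h2 (Set.singleton_nonempty _).ne_empty
  exact hA.mem_of_tendsto hgrad (Filter.Eventually.of_forall hmem)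

lemma subdiff_subset_clarke (hf : ClosedConvexFun f) {x : Euc d}
    (hx : x ∈ interior (effDom f)) : subdiff f x ⊆ clarke f x := by
  intro v hv
  by_contra hvC
  have hclosed : IsClosed (clarke f x) := isClosed_closure
  have hconv : Convex ℝ (clarke f x) := (convex_convexHull ℝ _).closure
  obtain ⟨l, u, hl, hu⟩ := geometric_hahn_banach_closed_point hconv hclosed hvC
  obtain ⟨h, hh⟩ : ∃ h : Euc d, ∀ y, l y = ⟪h, y⟫ := by
    obtain ⟨h, hh⟩ := (InnerProductSpace.toDual ℝ (Euc d)).surjective l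
    exact ⟨h, fun y => by rw [← hh]; simp [InnerProductSpace.toDual_apply_apply]⟩
  -- construct w ∈ gradLim f x with ⟪h,v⟫ ≤ ⟪h,w⟫
  set g := toRealFun f with hgdef
  have hxe : x ∈ effDom f := interior_subset hx
  obtain ⟨δ, hδ, K, hball, hK⟩ := lipschitz_local hf hx
  have hKpos : (0:ℝ) ≤ K := K.2
  set c : ℝ := min 1 (δ / (8 * (‖h‖ + 1))) with hcdef
  have hc0 : 0 < c := lt_min one_pos (by positivity)
  have hcδ : c ≤ δ / 8 := by
    have h1 : δ / (8 * (‖h‖ + 1)) ≤ δ / 8 := by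
      apply div_le_div_of_nonneg_left hδ.le (by norm_num)
      nlinarith [norm_nonneg h]
    exact le_trans (min_le_right _ _) h1
  set t : ℕ → ℝ := fun n => c / (n + 1) with htdef
  have ht0 : ∀ n, 0 < t n := fun n => by positivity
  have htc : ∀ n, t n ≤ c := fun n =>
    div_le_self hc0.le (by linarith [Nat.cast_nonneg (α := ℝ) n])
  have ht1 : ∀ n, t n ≤ 1 := fun n => le_trans (htc n) (min_le_left _ _)
  have hth : ∀ n, t n * ‖h‖ ≤ δ / 8 := by
    intro n
    have h1 : t n * ‖h‖ ≤ c * ‖h‖ := mul_le_mul_of_nonneg_right (htc n) (norm_nonneg h)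
    have h2 : c * ‖h‖ ≤ (δ / (8 * (‖h‖ + 1))) * ‖h‖ :=
      mul_le_mul_of_nonneg_right (min_le_right _ _) (norm_nonneg h)
    have h3 : (δ / (8 * (‖h‖ + 1))) * ‖h‖ ≤ δ / 8 := by
      rw [div_mul_eq_mul_div, div_le_div_iff₀ (by positivity) (by norm_num)]
      nlinarith [norm_nonneg h]
    linarith
  have httend : Filter.Tendsto t Filter.atTop (𝓝 0) := by
    have := tendsto_seq.const_mul c
    simpa [htdef, mul_one_div, div_eq_mul_inv] using this
  set xt : ℕ → Euc d := fun n => x + t n • h with hxtdef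
  have hxtball : ∀ n, xt n ∈ ball x (δ/4) := by
    intro n
    rw [mem_ball_iff_norm]
    have he : x + t n • h - x = t n • h := by rw [add_sub_cancel_left]
    rw [he, norm_smul, Real.norm_eq_abs, abs_of_pos (ht0 n)]
    have := hth n
    linarith
  have hxtD : ∀ n, xt n ∈ interior (effDom f) := fun n =>
    hball (ball_subset_ball (by linarith) (hxtball n))
  -- choose differentiability points近 xt n
  have hchoice : ∀ n : ℕ, ∃ z ∈ domGrad f, dist z (xt n) < (t n)^2 :=
    fun n => domGrad_dense hf (hxtD n) (by positivity)
  choose ys hysdom hysdist using hchoice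
  have hts : ∀ n, (t n)^2 ≤ t n := fun n => by nlinarith [ht0 n, ht1 n]
  have htδ : ∀ n, t n ≤ δ / 8 := fun n => le_trans (htc n) hcδ
  have hysball : ∀ n, ys n ∈ ball x (δ/2) := by
    intro n
    rw [mem_ball]
    calc dist (ys n) x ≤ dist (ys n) (xt n) + dist (xt n) x := dist_triangle _ _ _
      _ < (t n)^2 + δ/4 := add_lt_add (hysdist n) (mem_ball.mp (hxtball n))
      _ ≤ δ/8 + δ/4 := by have := le_trans (hts n) (htδ n); linarith
      _ < δ/2 := by linarith
  set ws : ℕ → Euc d := fun n => gradient g (ys n) with hwsdef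
  have hwsub : ∀ n, ws n ∈ subdiff f (ys n) := fun n =>
    grad_mem_subdiff hf (hysdom n).1 (hysdom n).2.hasGradientAt
  have hwnorm : ∀ n, ‖ws n‖ ≤ K := by
    intro n
    have hsubball : ball (ys n) (δ/2) ⊆ ball x δ := by
      intro z hz
      rw [mem_ball] at hz ⊢
      calc dist z x ≤ dist z (ys n) + dist (ys n) x := dist_triangle _ _ _
        _ < δ/2 + δ/2 := add_lt_add hz (mem_ball.mp (hysball n))
        _ = δ := by ring
    exact norm_le_of_subdiff hf (by linarith) (hsubball.trans hball)
      (hK.mono hsubball) (hwsub n)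
  have hwball : ∀ n, ws n ∈ Metric.closedBall (0 : Euc d) K := by
    intro n; rw [Metric.mem_closedBall, dist_zero_right]; exact hwnorm n
  obtain ⟨w, hwball', φ, hφ, hwconv⟩ := (isCompact_closedBall (0 : Euc d) (K:ℝ)).tendsto_subseq hwball
  have hytend : Filter.Tendsto ys Filter.atTop (𝓝 x) := by
    rw [tendsto_iff_dist_tendsto_zero]
    have hb : Filter.Tendsto (fun n => (t n)^2 + t n * ‖h‖) Filter.atTop (𝓝 0) := by
      have h1 : Filter.Tendsto (fun n => (t n)^2 + t n * ‖h‖) Filter.atTop (𝓝 (0^2 + 0 * ‖h‖)) :=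
        (httend.pow 2).add (httend.mul_const ‖h‖)
      simpa using h1
    refine squeeze_zero (fun n => dist_nonneg) (fun n => ?_) hb
    calc dist (ys n) x ≤ dist (ys n) (xt n) + dist (xt n) x := dist_triangle _ _ _
      _ ≤ (t n)^2 + t n * ‖h‖ := by
          have h1 := (hysdist n).le
          have h2 : dist (xt n) x = t n * ‖h‖ := by
            rw [dist_eq_norm]
            show ‖x + t n • h - x‖ = t n * ‖h‖
            rw [add_sub_cancel_left, norm_smul, Real.norm_eq_abs, abs_of_pos (ht0 n)]
          linarith
  have hwgrad : w ∈ gradLim f x := by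
    refine ⟨fun n => ys (φ n), fun n => hysdom (φ n), hytend.comp hφ.tendsto_atTop, ?_⟩
    exact hwconv
  -- inequality ⟪h,v⟫ ≤ ⟪h,w⟫
  have hineqn : ∀ n, ⟪h, v⟫ ≤ ⟪h, ws n⟫ + 2 * K * t n := by
    intro n
    have h1 := subdiff_real hf hxe hv (interior_subset (hxtD n))
    have he : xt n - x = t n • h := by rw [hxtdef]; show x + t n • h - x = t n • h; rw [add_sub_cancel_left]
    rw [he, real_inner_smul_left] at h1
    -- g (xt n) ≤ g (ys n) + K * t n ^ 2
    have h2 : g (xt n) ≤ g (ys n) + K * (t n)^2 := by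
      have hxtb : xt n ∈ ball x δ := ball_subset_ball (by linarith) (hxtball n)
      have hysb : ys n ∈ ball x δ := ball_subset_ball (by linarith) (hysball n)
      have := hK.dist_le_mul (xt n) hxtb (ys n) hysb
      rw [Real.dist_eq] at this
      have h3 : |g (xt n) - g (ys n)| ≤ K * (t n)^2 := by
        refine le_trans this ?_
        have h4 : dist (xt n) (ys n) ≤ (t n)^2 := by
          rw [dist_comm]; exact (hysdist n).le
        nlinarith [dist_nonneg (x := xt n) (y := ys n)]
      linarith [(abs_le.mp h3).1, (abs_le.mp h3).2]
    -- g (ys n) - g x ≤ ⟪ys n - x, ws n⟫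
    have h5 := subdiff_real hf (interior_subset (hysdom n).1) (hwsub n) hxe
    have h6 : ⟪x - ys n, ws n⟫ = -⟪ys n - x, ws n⟫ := by
      rw [← inner_neg_left]; congr 1; abel
    rw [h6] at h5
    -- ⟪ys n - x, ws n⟫ ≤ t n * ⟪h, ws n⟫ + K * t n^2
    have h7 : ⟪ys n - x, ws n⟫ ≤ t n * ⟪h, ws n⟫ + K * (t n)^2 := by
      have hsplit : ys n - x = t n • h + (ys n - xt n) := by
        rw [hxtdef]; show ys n - x = t n • h + (ys n - (x + t n • h)); abel
      rw [hsplit, inner_add_left, real_inner_smul_left]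
      have h8 : ⟪ys n - xt n, ws n⟫ ≤ ‖ys n - xt n‖ * ‖ws n‖ := real_inner_le_norm _ _
      have h9 : ‖ys n - xt n‖ ≤ (t n)^2 := by
        rw [← dist_eq_norm]; exact (hysdist n).le
      have h10 : ‖ys n - xt n‖ * ‖ws n‖ ≤ (t n)^2 * K := by
        apply mul_le_mul h9 (hwnorm n) (norm_nonneg _) (by positivity)
      nlinarith
    have ht := ht0 n
    have hfin : t n * ⟪h, v⟫ ≤ t n * (⟪h, ws n⟫ + 2 * K * t n) := by
      have ht2 : t n * t n = (t n)^2 := (sq (t n)).symm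
      rw [mul_add]
      nlinarith
    exact le_of_mul_le_mul_left hfin ht
  have hlim : Filter.Tendsto (fun n => ⟪h, ws (φ n)⟫ + 2 * K * t (φ n)) Filter.atTop
      (𝓝 (⟪h, w⟫ + 2 * K * 0)) := by
    apply Filter.Tendsto.add
    · exact (Continuous.inner continuous_const continuous_id).continuousAt.tendsto.comp hwconv
    · exact (httend.comp hφ.tendsto_atTop).const_mul _
  rw [mul_zero, add_zero] at hlim
  have hfinal : ⟪h, v⟫ ≤ ⟪h, w⟫ :=
    ge_of_tendsto hlim (Filter.Eventually.of_forall fun n => hineqn (φ n))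
  have h1 : l w < u := hl w (subset_closure (subset_convexHull ℝ _ hwgrad))
  rw [hh] at h1 hu
  linarith

end Aux

/-- Lemma 5 of the paper, second part. -/
theorem stmt8 {d : ℕ} (f : Euc d → EReal) (hf : ClosedConvexFun f)
    (hD : (interior (effDom f)).Nonempty)
    (A : Set (Euc d)) (hA : IsClosed A)
    (hfA : ∀ x ∈ closure (interior (effDom f)), restrSup f A x = f x) :
    (∀ x ∈ interior (effDom f), clarke f x = subdiff f x ∧
      subdiff f x = convexHull ℝ (subdiff f x ∩ A)) ∧
    (∀ x : Euc d, (clarke f x).Nonempty →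
      clarke f x ⊆ closure (convexHull ℝ (subdiff f x ∩ A))) := by
  constructor
  · intro x hx
    constructor
    · apply Set.Subset.antisymm
      · rw [clarke_eq]
        refine (IsClosed.closure_subset_iff (subdiff_isClosed hf x)).mpr ?_
        exact convexHull_min (gradLim_subset_subdiff hf hD x) (subdiff_convex hf x)
      · exact subdiff_subset_clarke hf hx
    · exact subdiff_eq_convexHull hf hA hfA hx
  · intro x _
    rw [clarke_eq]
    apply closure_mono
    apply convexHull_mono
    exact Set.subset_inter (gradLim_subset_subdiff hf hD x) (gradLim_subset_A hf hA hfA x)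

end
end

section
/- Let f : ℝ^d → ℝ ∪ {+∞} be a closed convex function with int(dom f) ≠ ∅. Then {(y, f*(y)) : y ∈ range ∇f} is exactly the set of exposed points of the epigraph of the convex conjugate f*. -/
open Filter Topology Set Pointwise
open scoped RealInnerProductSpace

noncomputable section

namespace Prop1Aux

variable {d : ℕ} {f : Euc d → EReal}

/-- On the effective domain, `f` equals the coercion of its real part. -/
lemma qcoe (hf : ClosedConvexFun f) {x : Euc d} (hx : f x ≠ ⊤) :
    f x = ((toRealFun f x : ℝ) : EReal) :=
  (EReal.coe_toReal hx (hf.2.1 x)).symm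

/-- Real form of the convexity inequality. -/
lemma combo_le (hf : ClosedConvexFun f) {x y : Euc d} {a b : ℝ}
    (hx : f x ≠ ⊤) (hy : f y ≠ ⊤) (ha : 0 ≤ a) (hb : 0 ≤ b) (hab : a + b = 1) :
    f (a • x + b • y) ≤ ((a * toRealFun f x + b * toRealFun f y : ℝ) : EReal) := by
  have h := hf.2.2.2 x y a b ha hb hab
  rw [qcoe hf hx, qcoe hf hy] at h
  rw [EReal.coe_add, EReal.coe_mul, EReal.coe_mul]
  exact h

lemma combo_ne_top (hf : ClosedConvexFun f) {x y : Euc d} {a b : ℝ}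
    (hx : f x ≠ ⊤) (hy : f y ≠ ⊤) (ha : 0 ≤ a) (hb : 0 ≤ b) (hab : a + b = 1) :
    f (a • x + b • y) ≠ ⊤ :=
  ((combo_le hf hx hy ha hb hab).trans_lt (EReal.coe_lt_top _)).ne

lemma combo_real (hf : ClosedConvexFun f) {x y : Euc d} {a b : ℝ}
    (hx : f x ≠ ⊤) (hy : f y ≠ ⊤) (ha : 0 ≤ a) (hb : 0 ≤ b) (hab : a + b = 1) :
    toRealFun f (a • x + b • y) ≤ a * toRealFun f x + b * toRealFun f y := by
  have h := combo_le hf hx hy ha hb hab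
  rw [qcoe hf (combo_ne_top hf hx hy ha hb hab)] at h
  exact_mod_cast h

/-- Subgradient property (global, `EReal` form). -/
def SG (f : Euc d → EReal) (x₀ y : Euc d) : Prop :=
  ∀ x : Euc d, ((toRealFun f x₀ + ⟪x - x₀, y⟫ : ℝ) : EReal) ≤ f x

lemma le_conj (x y : Euc d) : ((⟪x, y⟫ : ℝ) : EReal) - f x ≤ fconj f y :=
  le_iSup (fun x => ((⟪x, y⟫ : ℝ) : EReal) - f x) x

lemma conj_le_iff_SG (hf : ClosedConvexFun f) {x₀ : Euc d} (hx₀ : f x₀ ≠ ⊤) {y : Euc d} :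
    fconj f y ≤ ((⟪x₀, y⟫ - toRealFun f x₀ : ℝ) : EReal) ↔ SG f x₀ y := by
  constructor
  · intro h x
    by_cases hx : f x = ⊤
    · rw [hx]; exact le_top
    · have h1 : ((⟪x, y⟫ : ℝ) : EReal) - f x ≤ ((⟪x₀, y⟫ - toRealFun f x₀ : ℝ) : EReal) :=
        (le_conj x y).trans h
      rw [qcoe hf hx, ← EReal.coe_sub, EReal.coe_le_coe_iff] at h1
      rw [qcoe hf hx, EReal.coe_le_coe_iff]
      have : ⟪x - x₀, y⟫ = ⟪x, y⟫ - ⟪x₀, y⟫ := inner_sub_left x x₀ y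
      linarith
  · intro h
    refine iSup_le fun x => ?_
    by_cases hx : f x = ⊤
    · rw [hx, EReal.sub_top]; exact bot_le
    · have h1 := h x
      rw [qcoe hf hx, EReal.coe_le_coe_iff] at h1
      rw [qcoe hf hx, ← EReal.coe_sub, EReal.coe_le_coe_iff]
      have : ⟪x - x₀, y⟫ = ⟪x, y⟫ - ⟪x₀, y⟫ := inner_sub_left x x₀ y
      linarith

lemma conj_ne_bot (hf : ClosedConvexFun f) (y : Euc d) : fconj f y ≠ ⊥ := by
  obtain ⟨x, hx⟩ := hf.2.2.1
  have h1 : ((⟪x, y⟫ : ℝ) : EReal) - f x ≤ fconj f y := le_conj x y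
  rw [qcoe hf hx, ← EReal.coe_sub] at h1
  intro hb
  rw [hb, le_bot_iff] at h1
  exact EReal.coe_ne_bot _ h1

lemma SG_conj_eq (hf : ClosedConvexFun f) {x₀ y : Euc d} (hx₀ : f x₀ ≠ ⊤)
    (h : SG f x₀ y) : fconj f y = ((⟪x₀, y⟫ - toRealFun f x₀ : ℝ) : EReal) := by
  refine le_antisymm ((conj_le_iff_SG hf hx₀).2 h) ?_
  have h1 := le_conj (f := f) x₀ y
  rwa [qcoe hf hx₀, ← EReal.coe_sub] at h1

/-- The epigraph of `f`. -/
def epiSet (f : Euc d → EReal) : Set (Euc d × ℝ) := {p | f p.1 ≤ (p.2 : EReal)}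

lemma epi_closed (hf : ClosedConvexFun f) : IsClosed (epiSet f) := by
  rw [← isOpen_compl_iff, isOpen_iff_mem_nhds]
  rintro ⟨z, t⟩ hp
  have hlt : ((t : ℝ) : EReal) < f z := not_le.1 hp
  obtain ⟨c, hc1, hc2⟩ := EReal.exists_between_coe_real hlt
  have hev : ∀ᶠ x' in 𝓝 z, ((c : ℝ) : EReal) < f x' := hf.1 z _ hc2
  rw [nhds_prod_eq]
  have htc : t < c := by exact_mod_cast hc1
  refine Filter.mem_of_superset
    (Filter.prod_mem_prod hev (Iio_mem_nhds htc : Iio c ∈ 𝓝 t)) ?_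
  · rintro ⟨z', t'⟩ ⟨h1, h2⟩
    simp only [Set.mem_compl_iff, epiSet, Set.mem_setOf_eq, not_le]
    exact lt_trans (by exact_mod_cast h2) h1

lemma epi_convex (hf : ClosedConvexFun f) : Convex ℝ (epiSet f) := by
  rintro ⟨z1, t1⟩ h1 ⟨z2, t2⟩ h2 a b ha hb hab
  simp only [epiSet, Set.mem_setOf_eq] at h1 h2 ⊢
  have hz1 : f z1 ≠ ⊤ := (h1.trans_lt (EReal.coe_lt_top _)).ne
  have hz2 : f z2 ≠ ⊤ := (h2.trans_lt (EReal.coe_lt_top _)).ne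
  have hq1 : toRealFun f z1 ≤ t1 := by
    rw [qcoe hf hz1] at h1; exact_mod_cast h1
  have hq2 : toRealFun f z2 ≤ t2 := by
    rw [qcoe hf hz2] at h2; exact_mod_cast h2
  refine (combo_le hf hz1 hz2 ha hb hab).trans ?_
  rw [EReal.coe_le_coe_iff]
  have : (a • (z1, t1) + b • (z2, t2) : Euc d × ℝ).2 = a * t1 + b * t2 := rfl
  rw [this]
  exact add_le_add (mul_le_mul_of_nonneg_left hq1 ha) (mul_le_mul_of_nonneg_left hq2 hb)

lemma epi_sep (hf : ClosedConvexFun f) {x : Euc d} {r : ℝ} (h : (x, r) ∉ epiSet f) :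
    ∃ (y₁ : Euc d) (c u : ℝ), 0 ≤ c ∧ (⟪x, y₁⟫ + c * r < u) ∧
      (∀ z, f z ≠ ⊤ → u < ⟪z, y₁⟫ + c * toRealFun f z) := by
  obtain ⟨ℓ, u, hxr, hepi⟩ :=
    geometric_hahn_banach_point_closed (epi_convex hf) (epi_closed hf) h
  set y₁ := (InnerProductSpace.toDual ℝ (Euc d)).symm
    (ℓ.comp (ContinuousLinearMap.inl ℝ (Euc d) ℝ)) with hy₁
  set c := ℓ (0, 1) with hcdef
  have hdec : ∀ (z : Euc d) (t : ℝ), ℓ (z, t) = ⟪z, y₁⟫ + c * t := by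
    intro z t
    have h1 : ((z, t) : Euc d × ℝ) = (z, 0) + t • (0, 1) := by
      ext <;> simp
    rw [h1, map_add, map_smul, smul_eq_mul]
    have h2 : ℓ (z, 0) = ⟪z, y₁⟫ := by
      rw [real_inner_comm, hy₁, InnerProductSpace.toDual_symm_apply]; rfl
    rw [h2, mul_comm]
  have hc : 0 ≤ c := by
    by_contra hcneg
    push_neg at hcneg
    obtain ⟨xbar, hxbar⟩ := hf.2.2.1
    obtain ⟨n, hn⟩ := exists_nat_gt ((⟪xbar, y₁⟫ + c * toRealFun f xbar - u) / (-c))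
    have hn' : ⟪xbar, y₁⟫ + c * toRealFun f xbar - u < (n : ℝ) * (-c) :=
      (div_lt_iff₀ (neg_pos.2 hcneg)).1 hn
    have hmem : (xbar, toRealFun f xbar + n) ∈ epiSet f := by
      simp only [epiSet, Set.mem_setOf_eq, qcoe hf hxbar, EReal.coe_le_coe_iff]
      exact le_add_of_nonneg_right (Nat.cast_nonneg n)
    have := hepi _ hmem
    rw [hdec] at this
    nlinarith
  refine ⟨y₁, c, u, hc, by rw [hdec] at hxr; exact hxr, fun z hz => ?_⟩
  have hmem : (z, toRealFun f z) ∈ epiSet f := by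
    simp only [epiSet, Set.mem_setOf_eq, qcoe hf hz]
    exact le_refl _
  have := hepi _ hmem
  rwa [hdec] at this

lemma conj_bound (hf : ClosedConvexFun f) {y₁ : Euc d} {c u : ℝ} (hc : 0 < c)
    (hsep : ∀ z, f z ≠ ⊤ → u < ⟪z, y₁⟫ + c * toRealFun f z) :
    fconj f ((-c⁻¹) • y₁) ≤ ((-u / c : ℝ) : EReal) := by
  refine iSup_le fun z => ?_
  by_cases hz : f z = ⊤
  · rw [hz, EReal.sub_top]; exact bot_le
  · rw [qcoe hf hz, ← EReal.coe_sub, EReal.coe_le_coe_iff]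
    have h1 := hsep z hz
    have hin : ⟪z, (-c⁻¹) • y₁⟫ = -c⁻¹ * ⟪z, y₁⟫ := real_inner_smul_right _ _ _
    rw [hin]
    have h2 : (u - ⟪z, y₁⟫) / c < toRealFun f z := by
      rw [div_lt_iff₀ hc]; nlinarith
    have e1 : -c⁻¹ * ⟪z, y₁⟫ = -⟪z, y₁⟫ / c := by ring
    have e2 : (-u) / c = -⟪z, y₁⟫ / c - (u - ⟪z, y₁⟫) / c := by ring
    linarith

/-- Fenchel–Moreau inequality: `f ≤ f**`. -/
lemma biconj (hf : ClosedConvexFun f) (x : Euc d) :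
    f x ≤ ⨆ y : Euc d, ((⟪x, y⟫ : ℝ) : EReal) - fconj f y := by
  set S := ⨆ y : Euc d, ((⟪x, y⟫ : ℝ) : EReal) - fconj f y with hS
  have key : ∀ r : ℝ, ((r : ℝ) : EReal) < f x → ((r : ℝ) : EReal) ≤ S := by
    intro r hr
    have hnot : (x, r) ∉ epiSet f := fun hmem => absurd hmem (by
      simp only [epiSet, Set.mem_setOf_eq, not_le]; exact hr)
    obtain ⟨y₁, c, u, hc, hxr, hsep⟩ := epi_sep hf hnot
    rcases lt_or_eq_of_le hc with hcpos | hczero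
    · -- c > 0 : direct bound
      have hb := conj_bound hf hcpos hsep
      have hterm : ((⟪x, (-c⁻¹) • y₁⟫ : ℝ) : EReal) - ((-u / c : ℝ) : EReal) ≤
          ((⟪x, (-c⁻¹) • y₁⟫ : ℝ) : EReal) - fconj f ((-c⁻¹) • y₁) :=
        EReal.sub_le_sub (le_refl _) hb
      have hrle : r ≤ ⟪x, (-c⁻¹) • y₁⟫ - (-u / c) := by
        have hin : ⟪x, (-c⁻¹) • y₁⟫ = -c⁻¹ * ⟪x, y₁⟫ := real_inner_smul_right _ _ _
        have h2 : r < (u - ⟪x, y₁⟫) / c := by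
          rw [lt_div_iff₀ hcpos]; nlinarith
        have e1 : -c⁻¹ * ⟪x, y₁⟫ - (-u / c) = (u - ⟪x, y₁⟫) / c := by ring
        rw [hin, e1]; exact h2.le
      calc ((r : ℝ) : EReal) ≤ ((⟪x, (-c⁻¹) • y₁⟫ - (-u / c) : ℝ) : EReal) := by
            exact_mod_cast hrle
        _ = ((⟪x, (-c⁻¹) • y₁⟫ : ℝ) : EReal) - ((-u / c : ℝ) : EReal) := by
            rw [EReal.coe_sub]
        _ ≤ ((⟪x, (-c⁻¹) • y₁⟫ : ℝ) : EReal) - fconj f ((-c⁻¹) • y₁) := hterm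
        _ ≤ S := le_iSup (fun y => ((⟪x, y⟫ : ℝ) : EReal) - fconj f y) _
    · -- c = 0 : vertical separation
      subst hczero
      simp only [zero_mul, add_zero] at hxr hsep
      -- affine minorant from a second separation
      obtain ⟨xbar, hxbar⟩ := hf.2.2.1
      have hnot2 : (xbar, toRealFun f xbar - 1) ∉ epiSet f := by
        simp only [epiSet, Set.mem_setOf_eq, not_le, qcoe hf hxbar, EReal.coe_lt_coe_iff]
        linarith
      obtain ⟨y₂, c₂, u₂, hc₂, hxr₂, hsep₂⟩ := epi_sep hf hnot2
      have hc₂pos : 0 < c₂ := by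
        rcases lt_or_eq_of_le hc₂ with h | h
        · exact h
        · exfalso
          have h1 := hsep₂ xbar hxbar
          rw [← h] at h1 hxr₂
          simp only [zero_mul, add_zero] at h1 hxr₂
          linarith
      have hb₂ := conj_bound hf hc₂pos hsep₂
      set y' := (-c₂⁻¹) • y₂ with hy'
      set M := -u₂ / c₂ with hM
      -- for each n, bound the conjugate of y' - n • y₁
      have hbn : ∀ n : ℕ, fconj f (y' + (n : ℝ) • (-y₁)) ≤ ((M - n * u : ℝ) : EReal) := by
        intro n
        refine iSup_le fun z => ?_
        by_cases hz : f z = ⊤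
        · rw [hz, EReal.sub_top]; exact bot_le
        · rw [qcoe hf hz, ← EReal.coe_sub, EReal.coe_le_coe_iff]
          have h1 : ⟪z, y'⟫ - toRealFun f z ≤ M := by
            have := (le_conj (f := f) z y').trans hb₂
            rw [qcoe hf hz, ← EReal.coe_sub, EReal.coe_le_coe_iff] at this
            exact this
          have h2 : u < ⟪z, y₁⟫ := hsep z hz
          have hin : ⟪z, y' + (n : ℝ) • (-y₁)⟫ = ⟪z, y'⟫ - n * ⟪z, y₁⟫ := by
            simp only [inner_add_right, real_inner_smul_right, inner_neg_right]; ring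
          rw [hin]
          have h3 : (n : ℝ) * u ≤ n * ⟪z, y₁⟫ :=
            mul_le_mul_of_nonneg_left h2.le (Nat.cast_nonneg n)
          linarith
      -- pick n large
      have hupos : 0 < u - ⟪x, y₁⟫ := by linarith
      obtain ⟨n, hn⟩ := exists_nat_gt ((r - ⟪x, y'⟫ + M) / (u - ⟪x, y₁⟫))
      have hn' : r - ⟪x, y'⟫ + M < (n : ℝ) * (u - ⟪x, y₁⟫) := (div_lt_iff₀ hupos).1 hn
      set yn := y' + (n : ℝ) • (-y₁) with hyn
      have hinx : ⟪x, yn⟫ = ⟪x, y'⟫ - n * ⟪x, y₁⟫ := by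
        rw [hyn]
        simp only [inner_add_right, real_inner_smul_right, inner_neg_right]; ring
      have hrle : r ≤ ⟪x, yn⟫ - (M - n * u) := by rw [hinx]; nlinarith
      calc ((r : ℝ) : EReal) ≤ ((⟪x, yn⟫ - (M - n * u) : ℝ) : EReal) := by exact_mod_cast hrle
        _ = ((⟪x, yn⟫ : ℝ) : EReal) - ((M - n * u : ℝ) : EReal) := by rw [EReal.coe_sub]
        _ ≤ ((⟪x, yn⟫ : ℝ) : EReal) - fconj f yn := EReal.sub_le_sub (le_refl _) (hbn n)
        _ ≤ S := le_iSup (fun y => ((⟪x, y⟫ : ℝ) : EReal) - fconj f y) _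
  by_contra hcon
  push_neg at hcon
  obtain ⟨r, hr1, hr2⟩ := EReal.exists_between_coe_real hcon
  exact absurd (key r hr2) (not_le.2 hr1)

/-- Supporting hyperplane at a non-interior point of the domain. -/
lemma exists_support (hf : ClosedConvexFun f) (hD : (interior (effDom f)).Nonempty)
    {x₀ : Euc d} (hx₀ : f x₀ ≠ ⊤) (hni : x₀ ∉ interior (effDom f)) :
    ∃ v : Euc d, v ≠ 0 ∧ ∀ x, f x ≠ ⊤ → ⟪x - x₀, v⟫ ≤ (0 : ℝ) := by
  have hDconv : Convex ℝ (effDom f) := by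
    intro a ha b hb s t hs ht hst
    exact combo_ne_top hf ha hb hs ht hst
  obtain ⟨ℓ, hℓ⟩ := geometric_hahn_banach_open_point hDconv.interior isOpen_interior hni
  set v := (InnerProductSpace.toDual ℝ (Euc d)).symm ℓ with hv
  have hvz : ∀ z : Euc d, ⟪z, v⟫ = ℓ z := by
    intro z
    rw [real_inner_comm, hv, InnerProductSpace.toDual_symm_apply]
  obtain ⟨a₀, ha₀⟩ := hD
  have hlt : ℓ a₀ < ℓ x₀ := hℓ a₀ ha₀
  refine ⟨v, ?_, ?_⟩
  · intro hv0
    have := hvz a₀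
    have h2 := hvz x₀
    rw [hv0] at this h2
    simp only [inner_zero_right] at this h2
    rw [← this, ← h2] at hlt
    exact lt_irrefl _ hlt
  · intro x hx
    have hle : ℓ x ≤ ℓ x₀ := by
      by_contra hgt
      push_neg at hgt
      set M := |ℓ x - ℓ a₀| + 1 with hMdef
      have hM : 0 < M := by positivity
      set ε := (ℓ x - ℓ x₀) / M with hε
      have hεpos : 0 < ε := div_pos (by linarith) hM
      set t := min ε 1 with ht
      have htpos : 0 < t := lt_min hεpos one_pos
      have ht1 : t ≤ 1 := min_le_right _ _
      have hmem : (1 - t) • x + t • a₀ ∈ interior (effDom f) :=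
        hDconv.combo_closure_interior_mem_interior (subset_closure hx) ha₀
          (by linarith) htpos (by ring)
      have hcomb := hℓ _ hmem
      rw [map_add, map_smul, map_smul, smul_eq_mul, smul_eq_mul] at hcomb
      have habs : ℓ x - ℓ a₀ ≤ M := by
        rw [hMdef]; linarith [le_abs_self (ℓ x - ℓ a₀)]
      rcases min_cases ε 1 with ⟨he, h1⟩ | ⟨he, h1⟩
      · -- t = ε
        rw [ht, he] at hcomb
        have hεM : ε * M = ℓ x - ℓ x₀ := div_mul_cancel₀ _ hM.ne'
        have h3 : ε * (ℓ x - ℓ a₀) ≤ ε * M := mul_le_mul_of_nonneg_left habs hεpos.le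
        nlinarith
      · -- t = 1
        rw [ht, he] at hcomb
        simp only [sub_self, zero_mul, one_mul, zero_add] at hcomb
        have h2 : M < ℓ x - ℓ x₀ := by
          have := (lt_div_iff₀ hM).1 h1
          linarith
        rw [hMdef] at h2
        have := abs_nonneg (ℓ x - ℓ a₀)
        have h4 : ℓ a₀ - ℓ x ≤ |ℓ x - ℓ a₀| := by
          rw [abs_sub_comm]; exact le_abs_self _
        linarith
    have heq : ⟪x - x₀, v⟫ = ℓ x - ℓ x₀ := by
      rw [hvz (x - x₀), map_sub]
    linarith

/-- The one-sided difference quotients tend to the gradient pairing. -/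
lemma slope_tendsto {x₀ v y₀ : Euc d} (hg : HasGradientAt (toRealFun f) y₀ x₀) :
    Tendsto (fun t : ℝ => (toRealFun f (x₀ + t • v) - toRealFun f x₀) / t)
      (𝓝[>] (0 : ℝ)) (𝓝 ⟪v, y₀⟫) := by
  have hL : HasDerivAt (fun t : ℝ => x₀ + t • v) v 0 := by
    simpa using ((hasDerivAt_id (0 : ℝ)).smul_const v).const_add x₀
  have hcomp : HasDerivAt (fun t : ℝ => toRealFun f (x₀ + t • v)) ⟪v, y₀⟫ 0 := by
    have hg' : HasFDerivAt (toRealFun f) ((InnerProductSpace.toDual ℝ (Euc d)) y₀)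
        (x₀ + (0:ℝ) • v) := by simpa using hg.hasFDerivAt
    have := hg'.comp_hasDerivAt 0 hL
    rw [InnerProductSpace.toDual_apply_apply, real_inner_comm] at this
    exact this
  have h1 := hasDerivAt_iff_tendsto_slope.1 hcomp
  have h2 : Tendsto (slope (fun t : ℝ => toRealFun f (x₀ + t • v)) 0) (𝓝[>] (0 : ℝ))
      (𝓝 ⟪v, y₀⟫) := h1.mono_left (nhdsWithin_mono _ fun t ht => ne_of_gt ht)
  refine h2.congr fun t => ?_
  simp [slope_def_field]

/-- A gradient point is a subgradient. -/
lemma sg_of_grad (hf : ClosedConvexFun f) {x₀ y₀ : Euc d} (hx₀ : f x₀ ≠ ⊤)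
    (hg : HasGradientAt (toRealFun f) y₀ x₀) : SG f x₀ y₀ := by
  intro x
  by_cases hx : f x = ⊤
  · rw [hx]; exact le_top
  · rw [qcoe hf hx, EReal.coe_le_coe_iff]
    set ρ := toRealFun f x₀ with hρ
    set c := toRealFun f x with hc
    set v := x - x₀ with hv
    have key : ∀ t ∈ Ioo (0:ℝ) 1,
        (toRealFun f (x₀ + t • v) - ρ) / t ≤ c - ρ := by
      intro t ht
      have hcombo := combo_real hf hx₀ hx (by linarith [ht.2] : (0:ℝ) ≤ 1 - t)
        ht.1.le (by ring)
      have hpt : (1 - t) • x₀ + t • x = x₀ + t • v := by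
        rw [hv, smul_sub, sub_smul, one_smul]; abel
      rw [hpt] at hcombo
      rw [div_le_iff₀ ht.1]
      nlinarith [hcombo]
    have hlim : ⟪v, y₀⟫ ≤ c - ρ := by
      refine le_of_tendsto (slope_tendsto hg) ?_
      filter_upwards [Ioo_mem_nhdsGT_of_mem (Set.left_mem_Ico.2 one_pos)] with t ht
      exact key t ht
    linarith

/-- At a differentiability point, subgradients are unique. -/
lemma grad_unique (hf : ClosedConvexFun f) {x₀ y₀ : Euc d}
    (hx₀ : x₀ ∈ interior (effDom f)) (hg : HasGradientAt (toRealFun f) y₀ x₀)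
    {y : Euc d} (hy : SG f x₀ y) : y = y₀ := by
  obtain ⟨r, hr, hball⟩ := Metric.isOpen_iff.1 isOpen_interior x₀ hx₀
  have hkey : ∀ v : Euc d, ⟪v, y⟫ ≤ ⟪v, y₀⟫ := by
    intro v
    have hpos : 0 < r / (‖v‖ + 1) := by positivity
    refine ge_of_tendsto (slope_tendsto hg) ?_
    filter_upwards [Ioo_mem_nhdsGT_of_mem (Set.left_mem_Ico.2 hpos)] with t ht
    have hmem : x₀ + t • v ∈ Metric.ball x₀ r := by
      rw [Metric.mem_ball, dist_eq_norm, add_sub_cancel_left, norm_smul,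
        Real.norm_eq_abs, abs_of_pos ht.1]
      calc t * ‖v‖ ≤ t * (‖v‖ + 1) := by nlinarith [ht.1]
        _ < r / (‖v‖ + 1) * (‖v‖ + 1) := by
            apply mul_lt_mul_of_pos_right ht.2; positivity
        _ = r := by field_simp
    have htop : f (x₀ + t • v) ≠ ⊤ := interior_subset (hball hmem)
    have h1 := hy (x₀ + t • v)
    rw [qcoe hf htop, EReal.coe_le_coe_iff, add_sub_cancel_left,
      real_inner_smul_left] at h1
    rw [le_div_iff₀ ht.1]
    linarith
  have h2 : ⟪y - y₀, y - y₀⟫ ≤ (0 : ℝ) := by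
    have h3 := hkey (y - y₀)
    rw [show ⟪y - y₀, y - y₀⟫ = ⟪y - y₀, y⟫ - ⟪y - y₀, y₀⟫ from inner_sub_right _ _ _]
    linarith
  have := real_inner_self_nonpos.1 h2
  rwa [sub_eq_zero] at this

/-- One-sided difference quotient. -/
def Qd (f : Euc d → EReal) (x₀ v : Euc d) (t : ℝ) : ℝ :=
  (toRealFun f (x₀ + t • v) - toRealFun f x₀) / t

/-- Admissible parameter set. -/
def Td (r : ℝ) (v : Euc d) : Set ℝ := {t : ℝ | 0 < t ∧ t * ‖v‖ < r}

/-- Directional derivative. -/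
def phi (f : Euc d → EReal) (x₀ : Euc d) (r : ℝ) (v : Euc d) : ℝ :=
  sInf (Qd f x₀ v '' Td r v)

section DiffQuot

variable {x₀ y₀ v u : Euc d} {r : ℝ}

lemma memT_ball {t : ℝ} (ht : t ∈ Td r v) : x₀ + t • v ∈ Metric.ball x₀ r := by
  rw [Metric.mem_ball, dist_eq_norm, add_sub_cancel_left, norm_smul, Real.norm_eq_abs,
    abs_of_pos ht.1]
  exact ht.2

lemma Td_nonempty (hr : 0 < r) : (Td r v).Nonempty := by
  refine ⟨r / (2 * (‖v‖ + 1)), ?_, ?_⟩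
  · positivity
  · have h1 : 0 < ‖v‖ + 1 := by positivity
    rw [div_mul_eq_mul_div, div_lt_iff₀ (by positivity)]
    nlinarith [norm_nonneg v]

lemma Td_of_Ioo {t : ℝ} (ht : t ∈ Ioo (0:ℝ) (r / (‖v‖ + 1))) : t ∈ Td r v := by
  refine ⟨ht.1, ?_⟩
  have h1 : 0 < ‖v‖ + 1 := by positivity
  calc t * ‖v‖ ≤ t * (‖v‖ + 1) := by nlinarith [ht.1, norm_nonneg v]
    _ < r / (‖v‖ + 1) * (‖v‖ + 1) := mul_lt_mul_of_pos_right ht.2 h1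
    _ = r := by field_simp

lemma Qd_low (hf : ClosedConvexFun f) (hball : Metric.ball x₀ r ⊆ interior (effDom f))
    (hy₀ : SG f x₀ y₀) {t : ℝ} (ht : t ∈ Td r v) : ⟪v, y₀⟫ ≤ Qd f x₀ v t := by
  have htop : f (x₀ + t • v) ≠ ⊤ := interior_subset (hball (memT_ball ht))
  have h1 := hy₀ (x₀ + t • v)
  rw [qcoe hf htop, EReal.coe_le_coe_iff, add_sub_cancel_left, real_inner_smul_left] at h1
  rw [Qd, le_div_iff₀ ht.1]
  linarith

lemma Qd_bdd (hf : ClosedConvexFun f) (hball : Metric.ball x₀ r ⊆ interior (effDom f))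
    (hy₀ : SG f x₀ y₀) : BddBelow (Qd f x₀ v '' Td r v) := by
  refine ⟨⟪v, y₀⟫, ?_⟩
  rintro b ⟨t, ht, rfl⟩
  exact Qd_low hf hball hy₀ ht

lemma phi_le (hf : ClosedConvexFun f) (hball : Metric.ball x₀ r ⊆ interior (effDom f))
    (hy₀ : SG f x₀ y₀) {t : ℝ} (ht : t ∈ Td r v) : phi f x₀ r v ≤ Qd f x₀ v t :=
  csInf_le (Qd_bdd hf hball hy₀) ⟨t, ht, rfl⟩

lemma phi_low (hf : ClosedConvexFun f) (hr : 0 < r)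
    (hball : Metric.ball x₀ r ⊆ interior (effDom f)) (hy₀ : SG f x₀ y₀) :
    ⟪v, y₀⟫ ≤ phi f x₀ r v := by
  refine le_csInf ((Td_nonempty hr).image _) ?_
  rintro b ⟨t, ht, rfl⟩
  exact Qd_low hf hball hy₀ ht

lemma Qd_mono (hf : ClosedConvexFun f) (hball : Metric.ball x₀ r ⊆ interior (effDom f))
    (hx₀top : f x₀ ≠ ⊤) {s t : ℝ} (hs : s ∈ Td r v) (ht : t ∈ Td r v) (hst : s ≤ t) :
    Qd f x₀ v s ≤ Qd f x₀ v t := by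
  have hs0 := hs.1
  have ht0 := ht.1
  have htop : f (x₀ + t • v) ≠ ⊤ := interior_subset (hball (memT_ball ht))
  have hb1 : (0:ℝ) ≤ 1 - s / t := by
    rw [sub_nonneg, div_le_one ht0]; exact hst
  have hb2 : (0:ℝ) ≤ s / t := by positivity
  have hcombo := combo_real hf hx₀top htop hb1 hb2 (by ring)
  have hpt : (1 - s / t) • x₀ + (s / t) • (x₀ + t • v) = x₀ + s • v := by
    rw [smul_add, smul_smul, div_mul_cancel₀ _ ht0.ne', sub_smul, one_smul]
    abel
  rw [hpt] at hcombo
  rw [Qd, Qd, div_le_div_iff₀ hs0 ht0]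
  have h1 : toRealFun f (x₀ + s • v) - toRealFun f x₀ ≤
      s / t * (toRealFun f (x₀ + t • v) - toRealFun f x₀) := by nlinarith [hcombo]
  have h2 := mul_le_mul_of_nonneg_right h1 ht0.le
  have h3 : s / t * (toRealFun f (x₀ + t • v) - toRealFun f x₀) * t =
      s * (toRealFun f (x₀ + t • v) - toRealFun f x₀) := by
    field_simp
  nlinarith [h2, h3]

lemma Qd_tendsto (hf : ClosedConvexFun f) (hr : 0 < r)
    (hball : Metric.ball x₀ r ⊆ interior (effDom f)) (hx₀top : f x₀ ≠ ⊤)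
    (hy₀ : SG f x₀ y₀) :
    Tendsto (Qd f x₀ v) (𝓝[>] (0:ℝ)) (𝓝 (phi f x₀ r v)) := by
  rw [tendsto_order]
  constructor
  · intro a ha
    have hpos : 0 < r / (‖v‖ + 1) := by positivity
    filter_upwards [Ioo_mem_nhdsGT_of_mem (Set.left_mem_Ico.2 hpos)] with t ht
    exact ha.trans_le (phi_le hf hball hy₀ (Td_of_Ioo ht))
  · intro a ha
    obtain ⟨b, ⟨t₀, ht₀, rfl⟩, hb⟩ :=
      exists_lt_of_csInf_lt ((Td_nonempty hr).image _) ha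
    filter_upwards [Ioo_mem_nhdsGT_of_mem (Set.left_mem_Ico.2 ht₀.1)] with t ht
    have htT : t ∈ Td r v := by
      refine ⟨ht.1, lt_of_le_of_lt ?_ ht₀.2⟩
      exact mul_le_mul_of_nonneg_right ht.2.le (norm_nonneg v)
    exact (Qd_mono hf hball hx₀top htT ht₀ ht.2.le).trans_lt hb

lemma phi_zero (hf : ClosedConvexFun f) (hr : 0 < r)
    (hball : Metric.ball x₀ r ⊆ interior (effDom f)) (hx₀top : f x₀ ≠ ⊤)
    (hy₀ : SG f x₀ y₀) : phi f x₀ r (0 : Euc d) = 0 := by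
  have h0 : Tendsto (Qd f x₀ (0 : Euc d)) (𝓝[>] (0:ℝ)) (𝓝 0) := by
    refine tendsto_const_nhds.congr fun t => ?_
    rw [Qd]; simp
  exact tendsto_nhds_unique (Qd_tendsto hf hr hball hx₀top hy₀) h0

lemma phi_hom (hf : ClosedConvexFun f) (hr : 0 < r)
    (hball : Metric.ball x₀ r ⊆ interior (effDom f)) (hx₀top : f x₀ ≠ ⊤)
    (hy₀ : SG f x₀ y₀) {c : ℝ} (hc : 0 < c) (v : Euc d) :
    phi f x₀ r (c • v) = c * phi f x₀ r v := by
  have hmul : Tendsto (fun t : ℝ => c * t) (𝓝[>] (0:ℝ)) (𝓝[>] (0:ℝ)) := by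
    rw [tendsto_nhdsWithin_iff]
    constructor
    · have h1 : Tendsto (fun t : ℝ => c * t) (𝓝 (0:ℝ)) (𝓝 (c * 0)) :=
        (continuous_const.mul continuous_id).tendsto 0
      rw [mul_zero] at h1
      exact h1.mono_left nhdsWithin_le_nhds
    · filter_upwards [self_mem_nhdsWithin] with t ht
      exact mul_pos hc ht
  have h2 : Tendsto (fun t => Qd f x₀ v (c * t)) (𝓝[>] (0:ℝ)) (𝓝 (phi f x₀ r v)) :=
    (Qd_tendsto hf hr hball hx₀top hy₀).comp hmul
  have h3 : Tendsto (fun t => c * Qd f x₀ v (c * t)) (𝓝[>] (0:ℝ))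
      (𝓝 (c * phi f x₀ r v)) := h2.const_mul c
  have h4 : Tendsto (Qd f x₀ (c • v)) (𝓝[>] (0:ℝ)) (𝓝 (c * phi f x₀ r v)) := by
    refine h3.congr' ?_
    filter_upwards [self_mem_nhdsWithin] with t ht
    have hsm : t • (c • v) = (c * t) • v := by rw [smul_smul, mul_comm]
    rw [Qd, Qd, hsm, mul_div_assoc', mul_div_mul_left _ _ hc.ne']
  exact tendsto_nhds_unique (Qd_tendsto hf hr hball hx₀top hy₀) h4

lemma phi_subadd (hf : ClosedConvexFun f) (hr : 0 < r)
    (hball : Metric.ball x₀ r ⊆ interior (effDom f)) (hx₀top : f x₀ ≠ ⊤)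
    (hy₀ : SG f x₀ y₀) (u v : Euc d) :
    phi f x₀ r (u + v) ≤ phi f x₀ r u + phi f x₀ r v := by
  have hlim : Tendsto (fun t => Qd f x₀ u t + Qd f x₀ v t) (𝓝[>] (0:ℝ))
      (𝓝 (phi f x₀ r u + phi f x₀ r v)) :=
    (Qd_tendsto hf hr hball hx₀top hy₀).add (Qd_tendsto hf hr hball hx₀top hy₀)
  refine ge_of_tendsto hlim ?_
  have hpos : 0 < r / (‖u‖ + ‖v‖ + 1) := by positivity
  filter_upwards [Ioo_mem_nhdsGT_of_mem (Set.left_mem_Ico.2 hpos)] with t ht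
  have hS : 0 < ‖u‖ + ‖v‖ + 1 := by positivity
  have htS : t * (‖u‖ + ‖v‖) < r := by
    calc t * (‖u‖ + ‖v‖) ≤ t * (‖u‖ + ‖v‖ + 1) := by nlinarith [ht.1]
      _ < r / (‖u‖ + ‖v‖ + 1) * (‖u‖ + ‖v‖ + 1) := mul_lt_mul_of_pos_right ht.2 hS
      _ = r := by field_simp
  have htu : t ∈ Td r u := ⟨ht.1, by nlinarith [norm_nonneg u, norm_nonneg v, ht.1]⟩
  have htv : t ∈ Td r v := ⟨ht.1, by nlinarith [norm_nonneg u, norm_nonneg v, ht.1]⟩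
  have ht2 : t / 2 ∈ Td r (u + v) := by
    refine ⟨by linarith [ht.1], ?_⟩
    have := norm_add_le u v
    have h1 : t / 2 * ‖u + v‖ ≤ t / 2 * (‖u‖ + ‖v‖) := by
      apply mul_le_mul_of_nonneg_left this (by linarith [ht.1])
    nlinarith [norm_nonneg (u+v), ht.1]
  have htopu : f (x₀ + t • u) ≠ ⊤ := interior_subset (hball (memT_ball htu))
  have htopv : f (x₀ + t • v) ≠ ⊤ := interior_subset (hball (memT_ball htv))
  have hcombo := combo_real hf htopu htopv (by norm_num : (0:ℝ) ≤ 1/2)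
    (by norm_num : (0:ℝ) ≤ 1/2) (by norm_num)
  have hpt : ((1:ℝ)/2) • (x₀ + t • u) + ((1:ℝ)/2) • (x₀ + t • v) =
      x₀ + (t / 2) • (u + v) := by module
  rw [hpt] at hcombo
  refine (phi_le hf hball hy₀ ht2).trans ?_
  rw [Qd, Qd, Qd]
  have h2A : 2 * (toRealFun f (x₀ + (t/2) • (u + v)) - toRealFun f x₀) ≤
      (toRealFun f (x₀ + t • u) - toRealFun f x₀) +
      (toRealFun f (x₀ + t • v) - toRealFun f x₀) := by linarith
  rw [← add_div, div_le_div_iff₀ (by linarith [ht.1] : (0:ℝ) < t/2) ht.1]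
  nlinarith [h2A, ht.1]

lemma phi_linear (hf : ClosedConvexFun f) (hr : 0 < r)
    (hball : Metric.ball x₀ r ⊆ interior (effDom f)) (hx₀top : f x₀ ≠ ⊤)
    (hy₀ : SG f x₀ y₀) (huniq : ∀ y, SG f x₀ y → y = y₀) (v₀ : Euc d) :
    phi f x₀ r v₀ = ⟪v₀, y₀⟫ := by
  by_contra hne
  have hgt : ⟪v₀, y₀⟫ < phi f x₀ r v₀ :=
    lt_of_le_of_ne (phi_low hf hr hball hy₀) (Ne.symm hne)
  have hv₀ : v₀ ≠ 0 := by
    intro h0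
    rw [h0, phi_zero hf hr hball hx₀top hy₀] at hgt
    simp at hgt
  have H : ∀ c : ℝ, c • v₀ = 0 → c • (phi f x₀ r v₀) = 0 := by
    intro c hc
    rcases smul_eq_zero.1 hc with h | h
    · rw [h, zero_smul]
    · exact absurd h hv₀
  set pl := LinearPMap.mkSpanSingleton' (σ := RingHom.id ℝ) v₀ (phi f x₀ r v₀) H with hpl
  have hdom : ∀ z : pl.domain, pl z ≤ phi f x₀ r (z : Euc d) := by
    rintro ⟨z, hz⟩
    rw [hpl, LinearPMap.domain_mkSpanSingleton] at hz
    obtain ⟨c, hc⟩ := Submodule.mem_span_singleton.1 hz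
    have happ := LinearPMap.mkSpanSingleton'_apply (σ := RingHom.id ℝ) v₀ (phi f x₀ r v₀) H c
      (by rw [hc]; exact hz)
    have hzz : (⟨z, hz⟩ : pl.domain) = ⟨c • v₀, by rw [hc]; exact hz⟩ := by
      apply Subtype.ext; exact hc.symm
    rw [hzz, happ, smul_eq_mul]
    show c * phi f x₀ r v₀ ≤ phi f x₀ r (c • v₀)
    rcases lt_trichotomy c 0 with hcn | hc0 | hcp
    · rw [show c • v₀ = (-c) • (-v₀) by rw [neg_smul, smul_neg, neg_neg]]
      rw [phi_hom hf hr hball hx₀top hy₀ (neg_pos.2 hcn)]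
      have hsub := phi_subadd hf hr hball hx₀top hy₀ v₀ (-v₀)
      rw [add_neg_cancel, phi_zero hf hr hball hx₀top hy₀] at hsub
      nlinarith [hsub]
    · rw [hc0, zero_mul, zero_smul, phi_zero hf hr hball hx₀top hy₀]
    · rw [phi_hom hf hr hball hx₀top hy₀ hcp]
  obtain ⟨g, hg1, hg2⟩ := exists_extension_of_le_sublinear pl (phi f x₀ r)
    (fun c hc x => phi_hom hf hr hball hx₀top hy₀ hc x)
    (phi_subadd hf hr hball hx₀top hy₀) hdom
  have hgv₀ : g v₀ = phi f x₀ r v₀ := by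
    have hmem : v₀ ∈ pl.domain := by
      rw [hpl, LinearPMap.domain_mkSpanSingleton]
      exact Submodule.mem_span_singleton_self v₀
    have := hg1 ⟨v₀, hmem⟩
    rw [LinearPMap.mkSpanSingleton'_apply_self] at this
    exact this
  set y₁ := (InnerProductSpace.toDual ℝ (Euc d)).symm
    (LinearMap.toContinuousLinearMap g) with hy₁
  have hy₁z : ∀ z : Euc d, ⟪z, y₁⟫ = g z := by
    intro z
    rw [real_inner_comm, hy₁, InnerProductSpace.toDual_symm_apply]
    rfl
  have hSG1 : SG f x₀ y₁ := by
    intro x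
    by_cases hx : f x = ⊤
    · rw [hx]; exact le_top
    · rw [qcoe hf hx, EReal.coe_le_coe_iff]
      have hb1 : g (x - x₀) ≤ phi f x₀ r (x - x₀) := hg2 _
      have hb2 : phi f x₀ r (x - x₀) ≤ toRealFun f x - toRealFun f x₀ := by
        set t₀ := min (1/2 : ℝ) (r / (2 * (‖x - x₀‖ + 1))) with ht₀def
        have ht₀pos : 0 < t₀ := lt_min (by norm_num) (by positivity)
        have ht₀T : t₀ ∈ Td r (x - x₀) := by
          refine ⟨ht₀pos, ?_⟩
          have h1 : t₀ ≤ r / (2 * (‖x - x₀‖ + 1)) := min_le_right _ _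
          have h2 : 0 < ‖x - x₀‖ + 1 := by positivity
          calc t₀ * ‖x - x₀‖ ≤ r / (2 * (‖x - x₀‖ + 1)) * ‖x - x₀‖ :=
              mul_le_mul_of_nonneg_right h1 (norm_nonneg _)
            _ < r := by
              rw [div_mul_eq_mul_div, div_lt_iff₀ (by positivity)]
              nlinarith [norm_nonneg (x - x₀)]
        have ht₀1 : t₀ < 1 := lt_of_le_of_lt (min_le_left _ _) (by norm_num)
        refine (phi_le hf hball hy₀ ht₀T).trans ?_
        have hcombo := combo_real hf hx₀top hx
          (by linarith : (0:ℝ) ≤ 1 - t₀) ht₀pos.le (by ring)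
        have hpt : (1 - t₀) • x₀ + t₀ • x = x₀ + t₀ • (x - x₀) := by
          rw [smul_sub, sub_smul, one_smul]; abel
        rw [hpt] at hcombo
        rw [Qd, div_le_iff₀ ht₀pos]
        nlinarith [hcombo]
      have := (hy₁z (x - x₀)).trans_le (hb1.trans hb2)
      linarith
  have := huniq y₁ hSG1
  rw [← this] at hgt
  rw [hy₁z v₀, hgv₀] at hgt
  exact lt_irrefl _ hgt

end DiffQuot

/-- Uniqueness of the subgradient at an interior point implies differentiability. -/
lemma grad_of_unique (hf : ClosedConvexFun f) {x₀ y₀ : Euc d}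
    (hx₀ : x₀ ∈ interior (effDom f)) (hy₀ : SG f x₀ y₀)
    (huniq : ∀ y, SG f x₀ y → y = y₀) : HasGradientAt (toRealFun f) y₀ x₀ := by
  obtain ⟨r, hr, hball⟩ := Metric.isOpen_iff.1 isOpen_interior x₀ hx₀
  have hx₀top : f x₀ ≠ ⊤ := interior_subset hx₀
  have hphi := phi_linear hf hr hball hx₀top hy₀ huniq
  -- continuity of the real part on the interior of the domain
  have hconv : ConvexOn ℝ (interior (effDom f)) (toRealFun f) := by
    refine ⟨(convex_iff_forall_pos.2 ?_).interior, ?_⟩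
    · intro a ha b hb s t hs ht hst
      exact combo_ne_top hf ha hb hs.le ht.le hst
    · intro a ha b hb s t hs ht hst
      exact combo_real hf (interior_subset ha) (interior_subset hb) hs ht hst
  have hcont : ContinuousOn (toRealFun f) (interior (effDom f)) :=
    hconv.continuousOn isOpen_interior
  rw [hasGradientAt_iff_hasFDerivAt, hasFDerivAt_iff_isLittleO_nhds_zero,
    Asymptotics.isLittleO_iff]
  intro c hc
  -- for every unit vector pick a good parameter
  have hch : ∀ w : Metric.sphere (0 : Euc d) 1, ∃ t, t ∈ Td r (w : Euc d) ∧
      Qd f x₀ (w : Euc d) t < ⟪(w : Euc d), y₀⟫ + c / 2 := by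
    intro w
    have h1 : phi f x₀ r (w : Euc d) < phi f x₀ r (w : Euc d) + c / 2 := by linarith
    obtain ⟨b, ⟨t, htT, rfl⟩, hb⟩ := exists_lt_of_csInf_lt ((Td_nonempty hr).image _) h1
    exact ⟨t, htT, by rw [hphi] at hb; exact hb⟩
  choose tf htmem htlt using hch
  -- the open sets
  set O : Metric.sphere (0 : Euc d) 1 → Set (Euc d) := fun w =>
    {u' : Euc d | ‖u'‖ * tf w < r} ∩
      (fun u' => Qd f x₀ u' (tf w) - ⟪u', y₀⟫) ⁻¹' Iio (c / 2) with hO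
  have hOopen : ∀ w, IsOpen (O w) := by
    intro w
    have hSopen : IsOpen {u' : Euc d | ‖u'‖ * tf w < r} :=
      isOpen_lt (continuous_norm.mul continuous_const) continuous_const
    refine ContinuousOn.isOpen_inter_preimage ?_ hSopen isOpen_Iio
    have hmap : ∀ u' ∈ {u' : Euc d | ‖u'‖ * tf w < r},
        x₀ + (tf w) • u' ∈ interior (effDom f) := by
      intro u' hu'
      refine hball ?_
      rw [Metric.mem_ball, dist_eq_norm, add_sub_cancel_left, norm_smul,
        Real.norm_eq_abs, abs_of_pos (htmem w).1]
      rw [Set.mem_setOf_eq] at hu'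
      calc tf w * ‖u'‖ = ‖u'‖ * tf w := mul_comm _ _
        _ < r := hu'
    have h1 : ContinuousOn (fun u' : Euc d => toRealFun f (x₀ + (tf w) • u'))
        {u' : Euc d | ‖u'‖ * tf w < r} := by
      refine hcont.comp (Continuous.continuousOn
        (continuous_const.add (continuous_const_smul (tf w)))) ?_
      intro u' hu'
      exact hmap u' hu'
    have h2 : ContinuousOn (fun u' : Euc d => Qd f x₀ u' (tf w))
        {u' : Euc d | ‖u'‖ * tf w < r} := by
      simp only [Qd]
      exact (h1.sub continuousOn_const).div_const _
    exact h2.sub (Continuous.continuousOn (continuous_id.inner continuous_const))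
  -- compactness
  have hcover : Metric.sphere (0 : Euc d) 1 ⊆ ⋃ w, O w := by
    intro u hu
    refine Set.mem_iUnion.2 ⟨⟨u, hu⟩, ?_, ?_⟩
    · show ‖u‖ * tf ⟨u, hu⟩ < r
      have := (htmem ⟨u, hu⟩).2
      rwa [mul_comm]
    · show Qd f x₀ u (tf ⟨u, hu⟩) - ⟪u, y₀⟫ < c / 2
      have := htlt ⟨u, hu⟩
      simp only at this
      linarith
  obtain ⟨F, hF⟩ := (isCompact_sphere (0 : Euc d) 1).elim_finite_subcover O hOopen hcover
  -- the radius
  set δ : ℝ := if hFne : F.Nonempty then min r (F.inf' hFne tf) else r with hδ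
  have hδpos : 0 < δ := by
    rw [hδ]
    split_ifs with hFne
    · exact lt_min hr ((Finset.lt_inf'_iff hFne).2 fun w _ => (htmem w).1)
    · exact hr
  have hδr : δ ≤ r := by
    rw [hδ]; split_ifs with hFne
    · exact min_le_left _ _
    · exact le_refl r
  filter_upwards [Metric.ball_mem_nhds (0 : Euc d) hδpos] with h hh
  rw [Metric.mem_ball, dist_zero_right] at hh
  by_cases hh0 : h = 0
  · simp [hh0]
  · set un : Euc d := ‖h‖⁻¹ • h with hun
    have hnorm : ‖h‖ ≠ 0 := norm_ne_zero_iff.2 hh0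
    have hnpos : 0 < ‖h‖ := norm_pos_iff.2 hh0
    have hu1 : ‖un‖ = 1 := by
      rw [hun, norm_smul, Real.norm_eq_abs, abs_of_pos (inv_pos.2 hnpos),
        inv_mul_cancel₀ hnorm]
    have husphere : un ∈ Metric.sphere (0 : Euc d) 1 := by
      rw [mem_sphere_zero_iff_norm]; exact hu1
    obtain ⟨w, hwF, hwO⟩ := Set.mem_iUnion₂.1 (hF husphere)
    obtain ⟨hwS, hwQ⟩ := hwO
    rw [Set.mem_setOf_eq] at hwS
    rw [Set.mem_preimage, Set.mem_Iio] at hwQ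
    have hδw : δ ≤ tf w := by
      rw [hδ]
      have hFne : F.Nonempty := ⟨w, hwF⟩
      rw [dif_pos hFne]
      exact (min_le_right _ _).trans (Finset.inf'_le _ hwF)
    have hhT : ‖h‖ ∈ Td r un := ⟨hnpos, by rw [hu1, mul_one]; exact hh.trans_le hδr⟩
    have htfT : tf w ∈ Td r un := ⟨(htmem w).1, by rw [mul_comm]; exact hwS⟩
    have hmono := Qd_mono hf hball hx₀top hhT htfT (by linarith : ‖h‖ ≤ tf w)
    have hlow := Qd_low hf hball hy₀ hhT
    have hup : Qd f x₀ un ‖h‖ - ⟪un, y₀⟫ < c / 2 := by linarith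
    -- translate back to h
    have hxh : x₀ + ‖h‖ • un = x₀ + h := by
      rw [hun, smul_smul, mul_inv_cancel₀ hnorm, one_smul]
    have hQh : Qd f x₀ un ‖h‖ = (toRealFun f (x₀ + h) - toRealFun f x₀) / ‖h‖ := by
      rw [Qd, hxh]
    have hinh : ⟪un, y₀⟫ = ⟪h, y₀⟫ / ‖h‖ := by
      rw [hun, real_inner_smul_left, div_eq_inv_mul]
    set A := toRealFun f (x₀ + h) - toRealFun f x₀ - ⟪h, y₀⟫ with hA
    have hAeq : A / ‖h‖ = Qd f x₀ un ‖h‖ - ⟪un, y₀⟫ := by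
      rw [hQh, hinh, hA]; ring
    have hA0 : 0 ≤ A / ‖h‖ := by rw [hAeq]; linarith
    have hAup : A / ‖h‖ ≤ c / 2 := by rw [hAeq]; linarith
    have hA0' : 0 ≤ A := by
      by_contra hneg
      push_neg at hneg
      have := div_neg_of_neg_of_pos hneg hnpos
      linarith
    have hAup' : A ≤ c / 2 * ‖h‖ := by
      rw [div_le_iff₀ hnpos] at hAup
      linarith
    have hgoal : ‖toRealFun f (x₀ + h) - toRealFun f x₀ -
        (InnerProductSpace.toDual ℝ (Euc d)) y₀ h‖ ≤ c * ‖h‖ := by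
      have htd : (InnerProductSpace.toDual ℝ (Euc d)) y₀ h = ⟪h, y₀⟫ := by
        rw [InnerProductSpace.toDual_apply_apply, real_inner_comm]
      rw [htd, Real.norm_eq_abs]
      rw [abs_of_nonneg hA0']
      nlinarith [norm_nonneg h, hc]
    exact hgoal

end Prop1Aux

/-- Proposition 1 of the paper: `{(y, f*(y)) : y ∈ range ∇f}` is the set of
exposed points of `epi f*`. -/
theorem stmt11 {d : ℕ} (f : Euc d → EReal) (hf : ClosedConvexFun f)
    (hD : (interior (effDom f)).Nonempty) :
    {p : Euc d × ℝ | p.1 ∈ gradRange f ∧ (p.2 : EReal) = fconj f p.1} =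
      {p : Euc d × ℝ | fconj f p.1 ≤ (p.2 : EReal) ∧
        ∃ w : Euc d × ℝ, ∀ q : Euc d × ℝ,
          fconj f q.1 ≤ (q.2 : EReal) → q ≠ p →
            0 < ⟪q.1 - p.1, w.1⟫ + (q.2 - p.2) * w.2} := by
  open Prop1Aux in
  ext p
  obtain ⟨y₀, s₀⟩ := p
  simp only [Set.mem_setOf_eq]
  constructor
  · rintro ⟨⟨x₀, hx₀dom, hgradeq⟩, hs⟩
    obtain ⟨hx₀int, hx₀diff⟩ := hx₀dom
    have hx₀top : f x₀ ≠ ⊤ := interior_subset hx₀int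
    have hgrad : HasGradientAt (toRealFun f) y₀ x₀ := by
      have := hx₀diff.hasGradientAt
      rwa [show gradient (toRealFun f) x₀ = y₀ from hgradeq] at this
    have hSG := Prop1Aux.sg_of_grad hf hx₀top hgrad
    have hconj : fconj f y₀ = ((⟪x₀, y₀⟫ - toRealFun f x₀ : ℝ) : EReal) :=
      Prop1Aux.SG_conj_eq hf hx₀top hSG
    have hs₀ : s₀ = ⟪x₀, y₀⟫ - toRealFun f x₀ := by
      rw [hconj] at hs; exact_mod_cast hs
    refine ⟨le_of_eq hs.symm, ⟨(-x₀, 1), ?_⟩⟩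
    rintro ⟨y, s⟩ hq hne
    by_contra hle
    push_neg at hle
    simp only at hle hq ⊢
    have hinner : ⟪y - y₀, -x₀⟫ = -(⟪x₀, y⟫ - ⟪x₀, y₀⟫) := by
      rw [inner_neg_right, inner_sub_left, real_inner_comm y x₀, real_inner_comm y₀ x₀]
    have hsle : s ≤ ⟪x₀, y⟫ - toRealFun f x₀ := by
      rw [hinner] at hle; rw [hs₀] at hle; linarith [hle]
    have hqle : fconj f y ≤ ((⟪x₀, y⟫ - toRealFun f x₀ : ℝ) : EReal) :=
      hq.trans (EReal.coe_le_coe_iff.2 hsle)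
    have hSGy : Prop1Aux.SG f x₀ y := (Prop1Aux.conj_le_iff_SG hf hx₀top).1 hqle
    have hyy : y = y₀ := Prop1Aux.grad_unique hf hx₀int hgrad hSGy
    subst hyy
    have hsge : (s₀ : EReal) ≤ (s : EReal) := by rw [hs]; exact hq
    have : s₀ ≤ s := by exact_mod_cast hsge
    have : s = s₀ := le_antisymm (by rw [hs₀]; exact hsle) this
    exact hne (by simp [this])
  · rintro ⟨hepi, w, hw⟩
    -- Step A : w.2 > 0
    have hw2 : 0 < w.2 := by
      have h := hw (y₀, s₀ + 1) (hepi.trans (by exact_mod_cast le_of_lt (lt_add_one s₀)))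
        (by simp)
      simpa using h
    -- Step B : s₀ = f* y₀
    have hconj0 : fconj f y₀ = (s₀ : EReal) := by
      rcases lt_or_eq_of_le hepi with hlt | heq
      · exfalso
        have hnb := Prop1Aux.conj_ne_bot hf y₀
        have hnt : fconj f y₀ ≠ ⊤ := (hlt.trans (EReal.coe_lt_top s₀)).ne
        set c := (fconj f y₀).toReal with hc
        have hcc : fconj f y₀ = (c : EReal) := (EReal.coe_toReal hnt hnb).symm
        have hcs : c < s₀ := by rw [hcc] at hlt; exact_mod_cast hlt
        have h := hw (y₀, c) (le_of_eq hcc) (by simp [hcs.ne])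
        simp only [sub_self, inner_zero_left] at h
        nlinarith [h]
      · exact heq
    -- Step C : strict separation
    set x₀ := (-(w.2)⁻¹) • w.1 with hx₀def
    have hstrict : ∀ y : Euc d, y ≠ y₀ →
        ((s₀ + ⟪y - y₀, x₀⟫ : ℝ) : EReal) < fconj f y := by
      intro y hy
      by_cases ht : fconj f y = ⊤
      · rw [ht]; exact EReal.coe_lt_top _
      · have hnb := Prop1Aux.conj_ne_bot hf y
        set c := (fconj f y).toReal with hc
        have hcc : fconj f y = (c : EReal) := (EReal.coe_toReal ht hnb).symm
        have h := hw (y, c) (le_of_eq hcc) (by simp [hy])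
        simp only at h
        have hin : ⟪y - y₀, x₀⟫ = -(w.2)⁻¹ * ⟪y - y₀, w.1⟫ := real_inner_smul_right _ _ _
        rw [hcc, EReal.coe_lt_coe_iff, hin]
        have h4 : -⟪y - y₀, w.1⟫ / w.2 < c - s₀ := (div_lt_iff₀ hw2).2 (by linarith)
        have h5 : -(w.2)⁻¹ * ⟪y - y₀, w.1⟫ = -⟪y - y₀, w.1⟫ / w.2 := by ring
        linarith
    have hge : ∀ y : Euc d, ((s₀ + ⟪y - y₀, x₀⟫ : ℝ) : EReal) ≤ fconj f y := by
      intro y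
      by_cases hy : y = y₀
      · subst hy; simp only [sub_self, inner_zero_left, add_zero]; rw [hconj0]
      · exact (hstrict y hy).le
    -- Step D : value of f at x₀
    have hup : f x₀ ≤ ((⟪x₀, y₀⟫ - s₀ : ℝ) : EReal) := by
      refine (Prop1Aux.biconj hf x₀).trans (iSup_le fun y => ?_)
      have h1 : ((⟪x₀, y⟫ : ℝ) : EReal) - fconj f y ≤
          ((⟪x₀, y⟫ : ℝ) : EReal) - ((s₀ + ⟪y - y₀, x₀⟫ : ℝ) : EReal) :=
        EReal.sub_le_sub (le_refl _) (hge y)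
      refine h1.trans ?_
      rw [← EReal.coe_sub, EReal.coe_le_coe_iff]
      have : ⟪y - y₀, x₀⟫ = ⟪x₀, y⟫ - ⟪x₀, y₀⟫ := by
        rw [inner_sub_left, real_inner_comm y x₀, real_inner_comm y₀ x₀]
      linarith
    have hx₀top : f x₀ ≠ ⊤ := (hup.trans_lt (EReal.coe_lt_top _)).ne
    set ρ := toRealFun f x₀ with hρ
    have hfx₀ : f x₀ = ((ρ : ℝ) : EReal) := Prop1Aux.qcoe hf hx₀top
    have hρval : ρ = ⟪x₀, y₀⟫ - s₀ := by
      have hlow : ((⟪x₀, y₀⟫ - ρ : ℝ) : EReal) ≤ (s₀ : EReal) := by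
        have := Prop1Aux.le_conj (f := f) x₀ y₀
        rw [hfx₀, ← EReal.coe_sub, hconj0] at this
        exact this
      have h1 : ⟪x₀, y₀⟫ - ρ ≤ s₀ := by exact_mod_cast hlow
      have h2 : ρ ≤ ⟪x₀, y₀⟫ - s₀ := by
        rw [hfx₀] at hup; exact_mod_cast hup
      linarith
    -- y₀ is a subgradient at x₀
    have hSGy₀ : Prop1Aux.SG f x₀ y₀ := by
      refine (Prop1Aux.conj_le_iff_SG hf hx₀top).1 ?_
      rw [hconj0, EReal.coe_le_coe_iff, ← hρ, hρval]
      linarith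
    -- Step E : uniqueness of subgradient
    have huniq : ∀ y, Prop1Aux.SG f x₀ y → y = y₀ := by
      intro y hy
      by_contra hne
      have h1 := Prop1Aux.SG_conj_eq hf hx₀top hy
      have h2 := hstrict y hne
      rw [h1, EReal.coe_lt_coe_iff] at h2
      have : ⟪y - y₀, x₀⟫ = ⟪x₀, y⟫ - ⟪x₀, y₀⟫ := by
        rw [inner_sub_left, real_inner_comm y x₀, real_inner_comm y₀ x₀]
      rw [← hρ, hρval] at h2
      linarith
    -- Step F : x₀ is interior
    have hx₀int : x₀ ∈ interior (effDom f) := by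
      by_contra hni
      obtain ⟨v, hv0, hv⟩ := Prop1Aux.exists_support hf hD hx₀top hni
      have hSGv : Prop1Aux.SG f x₀ (y₀ + v) := by
        intro x
        by_cases hx : f x = ⊤
        · rw [hx]; exact le_top
        · have h1 := hSGy₀ x
          rw [Prop1Aux.qcoe hf hx] at h1 ⊢
          rw [EReal.coe_le_coe_iff] at h1 ⊢
          have h2 := hv x hx
          rw [inner_add_right]
          linarith
      exact hv0 (by have := huniq _ hSGv; simpa using this)
    -- Step G : differentiability
    have hgrad := Prop1Aux.grad_of_unique hf hx₀int hSGy₀ huniq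
    exact ⟨⟨x₀, ⟨hx₀int, hgrad.differentiableAt⟩, hgrad.gradient⟩, hconj0.symm⟩

end
end
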